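/- arXiv:2410.12981 — 5 statements merged into one kernel-verified Lean document; each statement's English description precedes it below -/
import Mathlib

section
/- Let H be a nonempty finite simple graph and let m ≤ e(H) be a positive integer. Then there exists a spanning subgraph H' of H with exactly m edges such that the maximum degree of the complement graph H \ H' (the graph on V(H) with edge set E(H) \ E(H')) satisfies Δ(H \ H') ≤ (Δ(H) + 1) · (e(H) - m)/e(H) + 1. -/
open scoped Classical

set_option linter.unusedSectionVars false
namespace VizingAux

open Finset

variable {V : Type*} [DecidableEq V]

/-- degree of a vertex wrt an edge finset -/
def degE (E : Finset (Sym2 V)) (v : V) : ℕ := #(E.filter (fun e => v ∈ e))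

/-- colors used at a vertex -/
def usedAt (E : Finset (Sym2 V)) (c : Sym2 V → ℕ) (v : V) : Finset ℕ :=
  (E.filter (fun e => v ∈ e)).image c

/-- proper coloring on an edge finset -/
def Proper (E : Finset (Sym2 V)) (c : Sym2 V → ℕ) : Prop :=
  ∀ e ∈ E, ∀ f ∈ E, e ≠ f → ∀ x : V, x ∈ e → x ∈ f → c e ≠ c f

lemma mem_usedAt {E : Finset (Sym2 V)} {c : Sym2 V → ℕ} {v : V} {γ : ℕ} :
    γ ∈ usedAt E c v ↔ ∃ e ∈ E, v ∈ e ∧ c e = γ := by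
  simp [usedAt, Finset.mem_image, Finset.mem_filter, and_assoc]

lemma usedAt_card_le {E : Finset (Sym2 V)} {c : Sym2 V → ℕ} {v : V} :
    #(usedAt E c v) ≤ degE E v :=
  Finset.card_image_le

lemma exists_free {E : Finset (Sym2 V)} {c : Sym2 V → ℕ} {v : V} {N : ℕ}
    (h : degE E v < N) : ((Finset.range N) \ usedAt E c v).Nonempty := by
  apply Finset.card_pos.mp
  have h1 : #(usedAt E c v ∩ Finset.range N) ≤ #(usedAt E c v) := card_le_card inter_subset_left
  have h3 := Finset.card_sdiff_add_card_inter (Finset.range N) (usedAt E c v)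
  have h2 : #(Finset.range N ∩ usedAt E c v) ≤ degE E v :=
    le_trans (by rw [Finset.inter_comm]; exact h1) usedAt_card_le
  have h4 : #(Finset.range N) = N := Finset.card_range N
  omega

/-- an edge with a given used color at a vertex, and the properness-based uniqueness -/
lemma proper_eq_of_same_color {E : Finset (Sym2 V)} {c : Sym2 V → ℕ}
    (hp : Proper E c) {e f : Sym2 V} {x : V} (he : e ∈ E) (hf : f ∈ E)
    (hxe : x ∈ e) (hxf : x ∈ f) (hc : c e = c f) : e = f := by
  by_contra hne
  exact hp e he f hf hne x hxe hxf hc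

/-- The Kempe subgraph of colors α, β -/
def kempe (E : Finset (Sym2 V)) (c : Sym2 V → ℕ) (α β : ℕ) : SimpleGraph V where
  Adj x y := x ≠ y ∧ s(x,y) ∈ E ∧ (c s(x,y) = α ∨ c s(x,y) = β)
  symm := by
    constructor
    intro x y h
    refine ⟨Ne.symm h.1, ?_, ?_⟩
    · rw [Sym2.eq_swap]; exact h.2.1
    · rw [Sym2.eq_swap]; exact h.2.2
  loopless := by constructor; intro x h; exact h.1 rfl

lemma kempe_adj {E : Finset (Sym2 V)} {c : Sym2 V → ℕ} {α β : ℕ} {x y : V} :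
    (kempe E c α β).Adj x y ↔ x ≠ y ∧ s(x,y) ∈ E ∧ (c s(x,y) = α ∨ c s(x,y) = β) := Iff.rfl

end VizingAux

namespace VizingAux

open Finset

variable {V : Type*} [DecidableEq V]

/-- Kempe-chain color swap on a vertex set S -/
noncomputable def flip (E : Finset (Sym2 V)) (c : Sym2 V → ℕ) (α β : ℕ) (S : Set V) :
    Sym2 V → ℕ :=
  fun e => if e ∈ E ∧ (∃ x ∈ e, x ∈ S) then
      (if c e = α then β else if c e = β then α else c e) else c e

section Flip

variable {E : Finset (Sym2 V)} {c : Sym2 V → ℕ} {α β : ℕ} {S : Set V}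

/-- closure hypothesis: S is closed under kempe adjacency -/
def KClosed (E : Finset (Sym2 V)) (c : Sym2 V → ℕ) (α β : ℕ) (S : Set V) : Prop :=
  ∀ x y : V, (kempe E c α β).Adj x y → x ∈ S → y ∈ S

lemma flip_endpoints_mem (hnd : ∀ e ∈ E, ¬ e.IsDiag) (hS : KClosed E c α β S)
    {e : Sym2 V} (he : e ∈ E) (hc : c e = α ∨ c e = β) {x : V} (hx : x ∈ e) (hxS : x ∈ S) :
    ∀ y ∈ e, y ∈ S := by
  induction e with
  | _ a b =>
    have hab : a ≠ b := by
      intro h; exact hnd _ he (by rw [h]; exact Sym2.isDiag_iff_proj_eq |>.mpr rfl)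
    have hxab : x = a ∨ x = b := Sym2.mem_iff.mp hx
    intro y hy
    have hyab : y = a ∨ y = b := Sym2.mem_iff.mp hy
    have hadj : (kempe E c α β).Adj a b := ⟨hab, he, hc⟩
    rcases hxab with rfl | rfl
    · rcases hyab with rfl | rfl
      · exact hxS
      · exact hS _ _ hadj hxS
    · rcases hyab with rfl | rfl
      · exact hS _ _ hadj.symm hxS
      · exact hxS

lemma flip_eq_of_not_touch (hnd : ∀ e ∈ E, ¬ e.IsDiag) (hS : KClosed E c α β S)
    {v : V} (hv : v ∉ S) {e : Sym2 V} (he : e ∈ E) (hve : v ∈ e) :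
    flip E c α β S e = c e := by
  unfold flip
  split_ifs with h h1 h2
  · rcases h with ⟨heE, x, hxe, hxS⟩
    exact absurd (flip_endpoints_mem hnd hS he (Or.inl h1) hxe hxS v hve) hv
  · rcases h with ⟨heE, x, hxe, hxS⟩
    exact absurd (flip_endpoints_mem hnd hS he (Or.inr h2) hxe hxS v hve) hv
  · rfl
  · rfl

lemma flip_proper (hnd : ∀ e ∈ E, ¬ e.IsDiag) (hS : KClosed E c α β S)
    (hp : Proper E c) (hab : α ≠ β) : Proper E (flip E c α β S) := by
  -- active predicate
  intro e he f hf hef x hxe hxf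
  have hA : ∀ g ∈ E, ¬ ((g ∈ E ∧ ∃ y ∈ g, y ∈ S) ∧ (c g = α ∨ c g = β)) →
      flip E c α β S g = c g := by
    intro g hg hng
    unfold flip
    split_ifs with h1 h2 h3
    · exact absurd ⟨h1, Or.inl h2⟩ hng
    · exact absurd ⟨h1, Or.inr h3⟩ hng
    · rfl
    · rfl
  by_cases hAe : (e ∈ E ∧ ∃ y ∈ e, y ∈ S) ∧ (c e = α ∨ c e = β) <;>
  by_cases hAf : (f ∈ E ∧ ∃ y ∈ f, y ∈ S) ∧ (c f = α ∨ c f = β)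
  · -- both active: swapped values
    have hne := hp e he f hf hef x hxe hxf
    unfold flip
    rw [if_pos hAe.1, if_pos hAf.1]
    rcases hAe.2 with h1 | h1 <;> rcases hAf.2 with h2 | h2
    · exact absurd (h1.trans h2.symm) hne
    · rw [if_pos h1, if_neg (by rw [h2]; exact Ne.symm hab), if_pos h2]
      exact hab.symm
    · rw [if_neg (by rw [h1]; exact Ne.symm hab), if_pos h1, if_pos h2]
      exact hab
    · exact absurd (h1.trans h2.symm) hne
  · -- e active, f not
    have hfe : flip E c α β S f = c f := hA f hf hAf
    have hcf : ¬ (c f = α ∨ c f = β) := by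
      intro hcf
      rcases hAe.1.2 with ⟨y, hye, hyS⟩
      have hxS : x ∈ S := flip_endpoints_mem hnd hS he hAe.2 hye hyS x hxe
      exact hAf ⟨⟨hf, ⟨x, hxf, hxS⟩⟩, hcf⟩
    push_neg at hcf
    have : flip E c α β S e = α ∨ flip E c α β S e = β := by
      unfold flip
      rw [if_pos hAe.1]
      rcases hAe.2 with h1 | h1
      · rw [if_pos h1]; exact Or.inr rfl
      · rw [if_neg (by rw [h1]; exact Ne.symm hab), if_pos h1]; exact Or.inl rfl
    rw [hfe]
    rcases this with h | h <;> rw [h]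
    · exact fun hh => hcf.1 hh.symm
    · exact fun hh => hcf.2 hh.symm
  · -- f active, e not
    have hfe : flip E c α β S e = c e := hA e he hAe
    have hce : ¬ (c e = α ∨ c e = β) := by
      intro hce
      rcases hAf.1.2 with ⟨y, hyf, hyS⟩
      have hxS : x ∈ S := flip_endpoints_mem hnd hS hf hAf.2 hyf hyS x hxf
      exact hAe ⟨⟨he, ⟨x, hxe, hxS⟩⟩, hce⟩
    push_neg at hce
    have : flip E c α β S f = α ∨ flip E c α β S f = β := by
      unfold flip
      rw [if_pos hAf.1]
      rcases hAf.2 with h1 | h1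
      · rw [if_pos h1]; exact Or.inr rfl
      · rw [if_neg (by rw [h1]; exact Ne.symm hab), if_pos h1]; exact Or.inl rfl
    rw [hfe]
    rcases this with h | h <;> rw [h]
    · exact hce.1
    · exact hce.2
  · rw [hA e he hAe, hA f hf hAf]
    exact hp e he f hf hef x hxe hxf

lemma flip_lt (hα : α < N) (hβ : β < N) (hc : ∀ e ∈ E, c e < N) :
    ∀ e ∈ E, flip E c α β S e < N := by
  intro e he
  unfold flip
  split_ifs <;> first | exact hβ | exact hα | exact hc e he

lemma not_used_flip_of_not_mem_S (hnd : ∀ e ∈ E, ¬ e.IsDiag) (hS : KClosed E c α β S)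
    {v : V} (hv : v ∉ S) {γ : ℕ} (h : γ ∉ usedAt E c v) :
    γ ∉ usedAt E (flip E c α β S) v := by
  intro hmem
  rcases mem_usedAt.mp hmem with ⟨e, he, hve, hce⟩
  rw [flip_eq_of_not_touch hnd hS hv he hve] at hce
  exact h (mem_usedAt.mpr ⟨e, he, hve, hce⟩)

lemma not_used_flip_alpha (hab : α ≠ β) {v : V} (hv : v ∈ S)
    (h : β ∉ usedAt E c v) : α ∉ usedAt E (flip E c α β S) v := by
  intro hmem
  rcases mem_usedAt.mp hmem with ⟨e, he, hve, hce⟩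
  unfold flip at hce
  rw [if_pos ⟨he, ⟨v, hve, hv⟩⟩] at hce
  split_ifs at hce with h1 h2
  · exact hab hce.symm
  · exact h (mem_usedAt.mpr ⟨e, he, hve, h2⟩)
  · exact h1 hce
    
lemma not_used_flip_other {γ : ℕ} (hγα : γ ≠ α) (hγβ : γ ≠ β) {v : V}
    (h : γ ∉ usedAt E c v) : γ ∉ usedAt E (flip E c α β S) v := by
  intro hmem
  rcases mem_usedAt.mp hmem with ⟨e, he, hve, hce⟩
  unfold flip at hce
  split_ifs at hce with h1 h2 h3
  · exact hγβ hce.symm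
  · exact hγα hce.symm
  · exact h (mem_usedAt.mpr ⟨e, he, hve, hce⟩)
  · exact h (mem_usedAt.mpr ⟨e, he, hve, hce⟩)

lemma flip_eq_of_color_not (hne : ¬ (c e = α ∨ c e = β)) :
    flip E c α β S e = c e := by
  push_neg at hne
  unfold flip
  split_ifs with h h1 h2
  · exact absurd h1 hne.1
  · exact absurd h2 hne.2
  · rfl
  · rfl

end Flip

end VizingAux

namespace VizingAux

open Finset SimpleGraph

variable {V : Type*} [DecidableEq V] [Fintype V]

section Endpoints

variable {E : Finset (Sym2 V)} {c : Sym2 V → ℕ} {α β : ℕ}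

/-- local kempe-degree of a vertex -/
private lemma kempe_local_deg_le_two (hp : Proper E c) (hab : α ≠ β) (x : V) :
    #((E.filter (fun e => c e = α ∨ c e = β)).filter (fun e => x ∈ e)) ≤ 2 := by
  have h2 : ({α, β} : Finset ℕ).card ≤ 2 := Finset.card_insert_le _ _ |>.trans (by simp)
  refine le_trans (Finset.card_le_card_of_injOn (fun e => c e) ?_ ?_) h2
  · intro e he
    simp only [Finset.mem_coe, Finset.mem_filter] at he
    rcases he.1.2 with h | h <;> simp [h]
  · intro e he f hf hcef
    simp only [Finset.coe_filter, Set.mem_setOf_eq, Finset.mem_filter] at he hf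
    exact proper_eq_of_same_color hp he.1.1 hf.1.1 he.2 hf.2 hcef

private lemma kempe_local_deg_le_one (hp : Proper E c) {x : V} {γ δ : ℕ}
    (hγδ : γ ≠ δ) (hmiss : γ ∉ usedAt E c x) :
    #((E.filter (fun e => c e = γ ∨ c e = δ)).filter (fun e => x ∈ e)) ≤ 1 := by
  have h1 : ({δ} : Finset ℕ).card = 1 := Finset.card_singleton _
  refine le_trans (Finset.card_le_card_of_injOn (fun e => c e) ?_ ?_) h1.le
  · intro e he
    simp only [Finset.mem_coe, Finset.mem_filter] at he
    rcases he.1.2 with h | h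
    · exact absurd (mem_usedAt.mpr ⟨e, he.1.1, he.2, h⟩) hmiss
    · simp [h]
  · intro e he f hf hcef
    simp only [Finset.coe_filter, Set.mem_setOf_eq, Finset.mem_filter] at he hf
    exact proper_eq_of_same_color hp he.1.1 hf.1.1 he.2 hf.2 hcef

/-- In the Kempe graph, a vertex missing α cannot reach two distinct vertices missing β
    (other than itself etc.) -/
lemma no_three_endpoints (hnd : ∀ e ∈ E, ¬ e.IsDiag) (hp : Proper E c) (hab : α ≠ β)
    {u a b : V} (hua : u ≠ a) (hub : u ≠ b) (habv : a ≠ b)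
    (hu : α ∉ usedAt E c u) (ha : β ∉ usedAt E c a) (hb : β ∉ usedAt E c b)
    (hra : (kempe E c α β).Reachable u a) (hrb : (kempe E c α β).Reachable u b) :
    False := by
  set K := kempe E c α β with hK
  set C : Finset V := Finset.univ.filter (fun w => K.Reachable u w) with hC
  have huC : u ∈ C := by simp [hC, SimpleGraph.Reachable.refl]
  have haC : a ∈ C := by simp [hC, hra]
  have hbC : b ∈ C := by simp [hC, hrb]
  set T : Finset (Sym2 V) := (E.filter (fun e => c e = α ∨ c e = β)) with hT
  set TC : Finset (Sym2 V) := T.filter (fun e => ∀ w ∈ e, w ∈ C) with hTC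
  -- parent map
  have hpar : ∀ x ∈ C.erase u, ∃ y, K.Adj x y ∧ K.dist u y + 1 ≤ K.dist u x := by
    intro x hx
    rw [Finset.mem_erase] at hx
    have hre : K.Reachable u x := by
      have := hx.2; rw [hC, Finset.mem_filter] at this; exact this.2
    have hdx : K.dist u x ≠ 0 :=
      (SimpleGraph.dist_ne_zero_iff_ne_and_reachable).mpr ⟨(Ne.symm hx.1), hre⟩
    obtain ⟨p, hp⟩ := hre.exists_walk_length_eq_dist
    obtain ⟨w, hadj, q, hq⟩ := SimpleGraph.Walk.exists_eq_cons_of_ne hx.1 p.reverse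
    refine ⟨w, hadj, ?_⟩
    have hlen : p.reverse.length = K.dist u x := by
      rw [SimpleGraph.Walk.length_reverse]; exact hp
    rw [hq] at hlen
    simp only [SimpleGraph.Walk.length_cons] at hlen
    have hdq : K.dist u w ≤ q.length := by
      rw [SimpleGraph.dist_comm]
      exact SimpleGraph.dist_le q
    omega
  classical
  let par : V → V := fun x =>
    if h : ∃ y, K.Adj x y ∧ K.dist u y + 1 ≤ K.dist u x then h.choose else x
  have hparspec : ∀ x ∈ C.erase u, K.Adj x (par x) ∧ K.dist u (par x) + 1 ≤ K.dist u x := by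
    intro x hx
    obtain ⟨y, hy⟩ := hpar x hx
    have hex : ∃ y, K.Adj x y ∧ K.dist u y + 1 ≤ K.dist u x := ⟨y, hy⟩
    simp only [par, dif_pos hex]
    exact hex.choose_spec
  -- injection from C.erase u into TC
  have hinj : #(C.erase u) ≤ #TC := by
    refine Finset.card_le_card_of_injOn (fun x => s(x, par x)) ?_ ?_
    · intro x hx
      obtain ⟨hadj, _⟩ := hparspec x hx
      show s(x, par x) ∈ TC
      rw [hTC, Finset.mem_filter, hT, Finset.mem_filter]
      have hxC : x ∈ C := Finset.mem_of_mem_erase hx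
      have hpC : par x ∈ C := by
        rw [hC, Finset.mem_filter]
        refine ⟨Finset.mem_univ _, ?_⟩
        have hrx : K.Reachable u x := by
          have := hxC; rw [hC, Finset.mem_filter] at this; exact this.2
        exact hrx.trans hadj.reachable
      refine ⟨⟨hadj.2.1, hadj.2.2⟩, ?_⟩
      intro w hw
      rcases Sym2.mem_iff.mp hw with rfl | rfl
      · exact hxC
      · exact hpC
    · intro x hx y hy hxy
      simp only at hxy
      rcases Sym2.eq_iff.mp hxy with ⟨h1, _⟩ | ⟨h1, h2⟩
      · exact h1
      · exfalso
        obtain ⟨_, hdx⟩ := hparspec x hx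
        obtain ⟨_, hdy⟩ := hparspec y hy
        rw [← h1] at hdy
        rw [h2] at hdx
        omega
  -- double counting
  have hdouble : ∑ x ∈ C, #(TC.filter (fun e => x ∈ e)) = 2 * #TC := by
    have h1 : ∑ x ∈ C, #(TC.filter (fun e => x ∈ e))
        = ∑ e ∈ TC, #(C.filter (fun x => x ∈ e)) := by
      simp only [Finset.card_filter]
      rw [Finset.sum_comm]
    rw [h1]
    have h2 : ∀ e ∈ TC, #(C.filter (fun x => x ∈ e)) = 2 := by
      intro e he
      rw [hTC, Finset.mem_filter, hT, Finset.mem_filter] at he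
      obtain ⟨⟨heE, _⟩, hall⟩ := he
      have hndiag := hnd e heE
      induction e with
      | _ p q =>
        have hpq : p ≠ q := fun h => hndiag (by rw [h]; exact (Sym2.isDiag_iff_proj_eq).mpr rfl)
        have : C.filter (fun x => x ∈ s(p,q)) = {p, q} := by
          ext x
          simp only [Finset.mem_filter, Sym2.mem_iff, Finset.mem_insert, Finset.mem_singleton]
          constructor
          · rintro ⟨_, h | h⟩
            · exact Or.inl h
            · exact Or.inr h
          · rintro (rfl | rfl)
            · exact ⟨hall _ (Sym2.mem_mk_left _ _), Or.inl rfl⟩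
            · exact ⟨hall _ (Sym2.mem_mk_right _ _), Or.inr rfl⟩
        rw [this, Finset.card_insert_of_notMem (by simp [hpq]), Finset.card_singleton]
    rw [Finset.sum_congr rfl h2, Finset.sum_const, smul_eq_mul, mul_comm]
  -- pointwise bounds
  have hbound : ∀ x ∈ C, #(TC.filter (fun e => x ∈ e)) ≤ 2 := by
    intro x _
    refine le_trans (Finset.card_le_card ?_) (kempe_local_deg_le_two hp hab x)
    intro e he
    rw [Finset.mem_filter] at he ⊢
    rw [hTC, Finset.mem_filter] at he
    exact ⟨he.1.1, he.2⟩
  have hboundu : #(TC.filter (fun e => u ∈ e)) ≤ 1 := by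
    refine le_trans (Finset.card_le_card ?_) (kempe_local_deg_le_one hp hab hu)
    intro e he
    rw [Finset.mem_filter] at he ⊢
    rw [hTC, Finset.mem_filter] at he
    exact ⟨he.1.1, he.2⟩
  have hbounda : #(TC.filter (fun e => a ∈ e)) ≤ 1 := by
    refine le_trans (Finset.card_le_card ?_) (kempe_local_deg_le_one hp (Ne.symm hab) ha)
    · intro e he
      rw [Finset.mem_filter] at he ⊢
      rw [hTC, Finset.mem_filter, hT, Finset.mem_filter] at he
      exact ⟨Finset.mem_filter.mpr ⟨he.1.1.1, he.1.1.2.symm⟩, he.2⟩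
  have hboundb : #(TC.filter (fun e => b ∈ e)) ≤ 1 := by
    refine le_trans (Finset.card_le_card ?_) (kempe_local_deg_le_one hp (Ne.symm hab) hb)
    · intro e he
      rw [Finset.mem_filter] at he ⊢
      rw [hTC, Finset.mem_filter, hT, Finset.mem_filter] at he
      exact ⟨Finset.mem_filter.mpr ⟨he.1.1.1, he.1.1.2.symm⟩, he.2⟩
  -- sum bound
  have hsum : ∑ x ∈ C, #(TC.filter (fun e => x ∈ e)) ≤ 2 * #C - 3 := by
    have hsubC : ({u, a, b} : Finset V) ⊆ C := by
      intro x hx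
      rcases Finset.mem_insert.mp hx with rfl | hx
      · exact huC
      rcases Finset.mem_insert.mp hx with rfl | hx
      · exact haC
      rw [Finset.mem_singleton] at hx
      subst hx; exact hbC
    have hcard3 : #({u, a, b} : Finset V) = 3 := by
      rw [Finset.card_insert_of_notMem (by simp [hua, hub]),
          Finset.card_insert_of_notMem (by simp [habv]), Finset.card_singleton]
    calc ∑ x ∈ C, #(TC.filter (fun e => x ∈ e))
        = ∑ x ∈ ({u,a,b} : Finset V), #(TC.filter (fun e => x ∈ e))
          + ∑ x ∈ C \ {u,a,b}, #(TC.filter (fun e => x ∈ e)) := by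
          rw [← Finset.sum_sdiff hsubC]; ring
      _ ≤ 3 + (2 * #C - 2 * 3) := by
          gcongr
          · have : ∑ x ∈ ({u,a,b} : Finset V), #(TC.filter (fun e => x ∈ e))
                ≤ ∑ x ∈ ({u,a,b} : Finset V), 1 := by
              refine Finset.sum_le_sum ?_
              intro x hx
              rcases Finset.mem_insert.mp hx with rfl | hx
              · exact hboundu
              rcases Finset.mem_insert.mp hx with rfl | hx
              · exact hbounda
              rw [Finset.mem_singleton] at hx
              subst hx; exact hboundb
            rw [Finset.sum_const, hcard3] at this
            simpa using this
          · have : ∑ x ∈ C \ {u,a,b}, #(TC.filter (fun e => x ∈ e))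
                ≤ ∑ x ∈ C \ {u,a,b}, 2 :=
              Finset.sum_le_sum (fun x hx => hbound x (Finset.mem_sdiff.mp hx).1)
            rw [Finset.sum_const, smul_eq_mul] at this
            rw [Finset.card_sdiff_of_subset hsubC, hcard3] at this
            have h3C : 3 ≤ #C := by rw [← hcard3]; exact Finset.card_le_card hsubC
            omega
      _ ≤ 2 * #C - 3 := by
          have h3C : 3 ≤ #C := by
            calc 3 = #({u,a,b} : Finset V) := hcard3.symm
            _ ≤ #C := Finset.card_le_card hsubC
          omega
  rw [hdouble] at hsum
  have hCcard : #C - 1 ≤ #TC := by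
    have := hinj
    rwa [Finset.card_erase_of_mem huC] at this
  have h3C : 3 ≤ #C := by
    have hsubC : ({u, a, b} : Finset V) ⊆ C := by
      intro x hx
      rcases Finset.mem_insert.mp hx with rfl | hx
      · exact huC
      rcases Finset.mem_insert.mp hx with rfl | hx
      · exact haC
      rw [Finset.mem_singleton] at hx
      subst hx; exact hbC
    calc 3 = #({u,a,b} : Finset V) := by
          rw [Finset.card_insert_of_notMem (by simp [hua, hub]),
              Finset.card_insert_of_notMem (by simp [habv]), Finset.card_singleton]
    _ ≤ #C := Finset.card_le_card hsubC
  omega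

end Endpoints

end VizingAux

namespace VizingAux

open Finset

variable {V : Type*} [DecidableEq V]

lemma rotate (E' : Finset (Sym2 V)) (c : Sym2 V → ℕ) (N : ℕ) (u v : V)
    (hp : Proper E' c) (hlt : ∀ e ∈ E', c e < N)
    (huv : s(u,v) ∉ E')
    (P : ℕ) (z : ℕ → V) (γ : ℕ → ℕ)
    (hz0 : z 0 = v)
    (hzu : ∀ i, i ≤ P → z i ≠ u)
    (hzinj : ∀ i, i ≤ P → ∀ j, j ≤ P → z i = z j → i = j)
    (hedge : ∀ i, 1 ≤ i → i ≤ P → s(u, z i) ∈ E')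
    (hfan : ∀ i, i < P → c (s(u, z (i+1))) = γ i)
    (hfree : ∀ i, i ≤ P → γ i ∉ usedAt E' c (z i))
    (hlast : γ P ∉ usedAt E' c u)
    (hγlt : ∀ i, i ≤ P → γ i < N) :
    ∃ c' : Sym2 V → ℕ, Proper (insert s(u,v) E') c' ∧
      ∀ e ∈ insert s(u,v) E', c' e < N := by
  classical
  set c' : Sym2 V → ℕ := fun e =>
    if h : ∃ i, i ≤ P ∧ e = s(u, z i) then γ (Nat.find h) else c e with hc'
  have hR1 : ∀ i, i ≤ P → c' (s(u, z i)) = γ i := by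
    intro i hi
    have h : ∃ j, j ≤ P ∧ s(u, z i) = s(u, z j) := ⟨i, hi, rfl⟩
    rw [hc']
    simp only [dif_pos h]
    congr 1
    have hspec := Nat.find_spec h
    have : z (Nat.find h) = z i := (Sym2.congr_right.mp hspec.2.symm)
    exact hzinj _ hspec.1 _ hi this
  have hR2 : ∀ e : Sym2 V, (¬ ∃ i, i ≤ P ∧ e = s(u, z i)) → c' e = c e := by
    intro e he
    rw [hc']
    simp only [dif_neg he]
  -- colors of fan edges are pairwise distinct, and distinct from other colors at u
  have hever : ∀ i, 1 ≤ i → i ≤ P → γ (i-1) ∈ usedAt E' c u := by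
    intro i h1 hP
    refine mem_usedAt.mpr ⟨s(u, z i), hedge i h1 hP, Sym2.mem_mk_left _ _, ?_⟩
    have := hfan (i-1) (by omega)
    rwa [Nat.sub_add_cancel h1] at this
  have hγinj : ∀ i, i ≤ P → ∀ j, j ≤ P → i ≠ j → γ i ≠ γ j := by
    intro i hi j hj hij
    rcases Nat.lt_or_ge i P with hiP | hiP <;> rcases Nat.lt_or_ge j P with hjP | hjP
    · rw [← hfan i hiP, ← hfan j hjP]
      refine hp _ (hedge (i+1) (by omega) (by omega)) _ (hedge (j+1) (by omega) (by omega))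
        ?_ u (Sym2.mem_mk_left _ _) (Sym2.mem_mk_left _ _)
      intro hh
      have := Sym2.congr_right.mp hh
      exact hij (by have := hzinj (i+1) (by omega) (j+1) (by omega) this; omega)
    · -- j = P
      have hjP' : j = P := le_antisymm hj hjP
      subst hjP'
      intro hh
      apply hlast
      rw [← hh, ← hfan i hiP]
      exact mem_usedAt.mpr ⟨s(u, z (i+1)), hedge (i+1) (by omega) (by omega),
        Sym2.mem_mk_left _ _, rfl⟩
    · have hiP' : i = P := le_antisymm hi hiP
      subst hiP'
      intro hh
      apply hlast
      rw [hh, ← hfan j hjP]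
      exact mem_usedAt.mpr ⟨s(u, z (j+1)), hedge (j+1) (by omega) (by omega),
        Sym2.mem_mk_left _ _, rfl⟩
    · exact absurd (le_antisymm hi hiP ▸ le_antisymm hj hjP ▸ rfl) hij
  -- main properness
  have hmem' : ∀ e ∈ insert s(u,v) E', (∃ i, i ≤ P ∧ e = s(u, z i)) ∨ e ∈ E' := by
    intro e he
    rcases Finset.mem_insert.mp he with rfl | he'
    · exact Or.inl ⟨0, Nat.zero_le _, by rw [hz0]⟩
    · exact Or.inr he'
  -- key asymmetric helper: fan edge vs non-fan edge
  have hkey : ∀ i, i ≤ P → ∀ f ∈ E', (¬ ∃ j, j ≤ P ∧ f = s(u, z j)) →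
      ∀ x, x ∈ s(u, z i) → x ∈ f → γ i ≠ c f := by
    intro i hi f hf hnf x hxe hxf
    rcases Sym2.mem_iff.mp hxe with rfl | rfl
    · -- x = u
      rcases Nat.lt_or_ge i P with hiP | hiP
      · rw [← hfan i hiP]
        refine hp _ (hedge (i+1) (by omega) (by omega)) _ hf ?_ x
          (Sym2.mem_mk_left _ _) hxf
        intro hh
        exact hnf ⟨i+1, by omega, hh.symm⟩
      · have : i = P := le_antisymm hi hiP
        subst this
        intro hh
        exact hlast (mem_usedAt.mpr ⟨f, hf, hxf, hh.symm⟩)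
    · -- x = z i
      intro hh
      exact hfree i hi (mem_usedAt.mpr ⟨f, hf, hxf, hh.symm⟩)
  refine ⟨c', ?_, ?_⟩
  · intro e he f hf hef x hxe hxf
    by_cases hne : ∃ i, i ≤ P ∧ e = s(u, z i) <;>
    by_cases hnf : ∃ j, j ≤ P ∧ f = s(u, z j)
    · rcases hne with ⟨i, hi, rfl⟩
      rcases hnf with ⟨j, hj, rfl⟩
      rw [hR1 i hi, hR1 j hj]
      exact hγinj i hi j hj (fun hh => hef (by rw [hh]))
    · rcases hne with ⟨i, hi, rfl⟩
      have hfE : f ∈ E' := (hmem' f hf).resolve_left hnf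
      rw [hR1 i hi, hR2 f hnf]
      exact hkey i hi f hfE hnf x hxe hxf
    · rcases hnf with ⟨j, hj, rfl⟩
      have heE : e ∈ E' := (hmem' e he).resolve_left hne
      rw [hR2 e hne, hR1 j hj]
      exact fun hh => hkey j hj e heE hne x hxf hxe hh.symm
    · have heE : e ∈ E' := (hmem' e he).resolve_left hne
      have hfE : f ∈ E' := (hmem' f hf).resolve_left hnf
      rw [hR2 e hne, hR2 f hnf]
      exact hp e heE f hfE hef x hxe hxf
  · intro e he
    by_cases hne : ∃ i, i ≤ P ∧ e = s(u, z i)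
    · rcases hne with ⟨i, hi, rfl⟩
      rw [hR1 i hi]
      exact hγlt i hi
    · rw [hR2 e hne]
      rcases hmem' e he with h | h
      · exact absurd h hne
      · exact hlt e h

end VizingAux

namespace VizingAux

open Finset

variable {V : Type*} [DecidableEq V] [Fintype V]

lemma extend (E' : Finset (Sym2 V)) (c : Sym2 V → ℕ) (N : ℕ) (u v : V)
    (huvne : u ≠ v)
    (hnd : ∀ e ∈ E', ¬ e.IsDiag)
    (hp : Proper E' c) (hlt : ∀ e ∈ E', c e < N)
    (huv : s(u,v) ∉ E')
    (hdeg : ∀ w, degE E' w < N) :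
    ∃ c' : Sym2 V → ℕ, Proper (insert s(u,v) E') c' ∧
      ∀ e ∈ insert s(u,v) E', c' e < N := by
  classical
  -- free color function
  have hfreeex : ∀ w : V, ((Finset.range N) \ usedAt E' c w).Nonempty :=
    fun w => exists_free (hdeg w)
  set free : V → ℕ := fun w => (((Finset.range N) \ usedAt E' c w).min' (hfreeex w)) with hfree
  have hfree_lt : ∀ w, free w < N := by
    intro w
    have := Finset.min'_mem _ (hfreeex w)
    rw [Finset.mem_sdiff, Finset.mem_range] at this
    exact this.1
  have hfree_not : ∀ w, free w ∉ usedAt E' c w := by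
    intro w
    have := Finset.min'_mem _ (hfreeex w)
    rw [Finset.mem_sdiff] at this
    exact this.2
  -- step function
  set stepf : V → Option V := fun w =>
    if h : ∃ e, e ∈ E' ∧ u ∈ e ∧ c e = free w then
      some (Sym2.Mem.other' h.choose_spec.2.1)
    else none with hstepf
  have hstep_some : ∀ w y, stepf w = some y →
      s(u,y) ∈ E' ∧ c s(u,y) = free w ∧ y ≠ u := by
    intro w y hy
    rw [hstepf] at hy
    beta_reduce at hy
    by_cases h : ∃ e, e ∈ E' ∧ u ∈ e ∧ c e = free w
    · rw [dif_pos h] at hy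
      have hspec := h.choose_spec
      have hoth := Sym2.other_spec' hspec.2.1
      have hyeq : y = Sym2.Mem.other' hspec.2.1 := (Option.some_inj.mp hy).symm
      subst hyeq
      rw [hoth]
      refine ⟨hspec.1, hspec.2.2, ?_⟩
      intro hyu
      apply hnd _ hspec.1
      rw [← hoth, hyu]
      exact (Sym2.isDiag_iff_proj_eq).mpr rfl
    · rw [dif_neg h] at hy
      exact nomatch hy
  have hstep_none : ∀ w, stepf w = none → free w ∉ usedAt E' c u := by
    intro w hw
    rw [hstepf] at hw
    beta_reduce at hw
    by_cases h : ∃ e, e ∈ E' ∧ u ∈ e ∧ c e = free w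
    · rw [dif_pos h] at hw
      exact nomatch hw
    · intro hmem
      rcases mem_usedAt.mp hmem with ⟨e, he, hue, hce⟩
      exact h ⟨e, he, hue, hce⟩
  have hstep_used : ∀ w y, stepf w = some y → free w ∈ usedAt E' c u := by
    intro w y hy
    obtain ⟨h1, h2, _⟩ := hstep_some w y hy
    exact mem_usedAt.mpr ⟨s(u,y), h1, Sym2.mem_mk_left _ _, h2⟩
  have hstep_det : ∀ w w', free w = free w' → stepf w = stepf w' := by
    intro w w' hww
    rw [hstepf]
    simp only [hww]
  -- the sequence
  set sq : ℕ → Option V := fun n => Nat.rec (some v) (fun _ ih => ih.bind stepf) n with hsq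
  have hsq0 : sq 0 = some v := rfl
  have hsqS : ∀ n, sq (n+1) = (sq n).bind stepf := fun n => rfl
  have hsq_shift : ∀ i j, sq i = sq j → ∀ t, sq (i+t) = sq (j+t) := by
    intro i j hij t
    induction t with
    | zero => simpa using hij
    | succ t ih =>
      have : i + (t+1) = (i+t) + 1 := by ring
      rw [this, hsqS, ih]
      have : j + (t+1) = (j+t) + 1 := by ring
      rw [this, hsqS]
  by_cases hnone : ∃ n, sq n = none
  · -- CASE I : the fan terminates with a color free at u
    set n₀ := Nat.find hnone with hn₀
    have hn₀spec : sq n₀ = none := Nat.find_spec hnone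
    have hn₀min : ∀ i, i < n₀ → sq i ≠ none := fun i hi => Nat.find_min hnone hi
    have hn₀pos : 0 < n₀ := by
      rcases Nat.eq_zero_or_pos n₀ with h | h
      · rw [h] at hn₀spec; rw [hsq0] at hn₀spec; exact absurd hn₀spec (by simp)
      · exact h
    set z : ℕ → V := fun i => (sq i).getD v with hz
    have hzsome : ∀ i, i < n₀ → sq i = some (z i) := by
      intro i hi
      have := hn₀min i hi
      rw [hz]
      cases hcase : sq i with
      | none => exact absurd hcase this
      | some w => simp [hcase]
    set P := n₀ - 1 with hP
    have hstepfan : ∀ i, i < P → stepf (z i) = some (z (i+1)) := by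
      intro i hi
      have h1 : sq (i+1) = some (z (i+1)) := hzsome (i+1) (by omega)
      rw [hsqS, hzsome i (by omega)] at h1
      simpa using h1
    have hsteplast : stepf (z P) = none := by
      have h1 : sq (P+1) = none := by
        have : P + 1 = n₀ := by omega
        rw [this]; exact hn₀spec
      rw [hsqS, hzsome P (by omega)] at h1
      simpa using h1
    have hzinj : ∀ i, i ≤ P → ∀ j, j ≤ P → z i = z j → i = j := by
      intro i hi j hj hij
      by_contra hne
      -- wlog i < j
      rcases Nat.lt_or_ge i j with hij' | hij'
      · have hs : sq i = sq j := by rw [hzsome i (by omega), hzsome j (by omega), hij]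
        have := hsq_shift i j hs (n₀ - j)
        have h1 : j + (n₀ - j) = n₀ := by omega
        rw [h1, hn₀spec] at this
        exact hn₀min (i + (n₀ - j)) (by omega) this
      · have hij'' : j < i := by omega
        have hs : sq j = sq i := by rw [hzsome i (by omega), hzsome j (by omega), hij]
        have := hsq_shift j i hs (n₀ - i)
        have h1 : i + (n₀ - i) = n₀ := by omega
        rw [h1, hn₀spec] at this
        exact hn₀min (j + (n₀ - i)) (by omega) this
    have hz0 : z 0 = v := by rw [hz]; simp [hsq0]
    have hzu : ∀ i, i ≤ P → z i ≠ u := by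
      intro i hi
      rcases Nat.eq_zero_or_pos i with rfl | hipos
      · rw [hz0]; exact Ne.symm huvne
      · have hi1 : i - 1 < P := by omega
        have := hstepfan (i-1) hi1
        have h2 : (i-1)+1 = i := by omega
        rw [h2] at this
        exact (hstep_some _ _ this).2.2
    refine rotate E' c N u v hp hlt huv P z (fun i => free (z i)) hz0 hzu hzinj ?_ ?_ ?_ ?_ ?_
    · intro i h1 hiP
      have hi1 : i - 1 < P := by omega
      have := hstepfan (i-1) hi1
      have h2 : (i-1)+1 = i := by omega
      rw [h2] at this
      exact (hstep_some _ _ this).1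
    · intro i hiP
      exact (hstep_some _ _ (hstepfan i hiP)).2.1
    · intro i _
      exact hfree_not (z i)
    · exact hstep_none _ hsteplast
    · intro i _
      exact hfree_lt (z i)
  · -- CASE II : the fan repeats; Kempe chain argument
    push_neg at hnone
    set z : ℕ → V := fun i => (sq i).getD v with hz
    have hzsome : ∀ i, sq i = some (z i) := by
      intro i
      rw [hz]
      cases hcase : sq i with
      | none => exact absurd hcase (hnone i)
      | some w => simp [hcase]
    have hstepfan : ∀ i, stepf (z i) = some (z (i+1)) := by
      intro i
      have h1 : sq (i+1) = some (z (i+1)) := hzsome (i+1)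
      rw [hsqS, hzsome i] at h1
      simpa using h1
    have hz0 : z 0 = v := by rw [hz]; simp [hsq0]
    have hzedge : ∀ i, 1 ≤ i → s(u, z i) ∈ E' ∧ c s(u, z i) = free (z (i-1)) ∧ z i ≠ u := by
      intro i h1
      have := hstepfan (i-1)
      have h2 : (i-1)+1 = i := by omega
      rw [h2] at this
      exact hstep_some _ _ this
    -- find first repeat
    have hrep : ∃ j, ∃ i, i < j ∧ z i = z j := by
      have hcard : Fintype.card V < Fintype.card (Fin (Fintype.card V + 1)) := by simp
      obtain ⟨a, b, hab, heq⟩ := Fintype.exists_ne_map_eq_of_card_lt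
        (fun i : Fin (Fintype.card V + 1) => z i) hcard
      rcases lt_trichotomy a.val b.val with h | h | h
      · exact ⟨b, a, h, heq⟩
      · exact absurd (Fin.ext h) hab
      · exact ⟨a, b, h, heq.symm⟩
    set J := Nat.find hrep with hJ
    obtain ⟨q, hqJ, hzq⟩ : ∃ i, i < J ∧ z i = z J := Nat.find_spec hrep
    have hJmin : ∀ j, j < J → ¬ ∃ i, i < j ∧ z i = z j := fun j hj => Nat.find_min hrep hj
    have hzinj : ∀ i, i ≤ J - 1 → ∀ j, j ≤ J - 1 → z i = z j → i = j := by
      intro i hi j hj hij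
      by_contra hne
      rcases Nat.lt_or_ge i j with h | h
      · exact hJmin j (by omega) ⟨i, h, hij⟩
      · have : j < i := by omega
        exact hJmin i (by omega) ⟨j, this, hij.symm⟩
    have hq1 : 1 ≤ q := by
      rcases Nat.eq_zero_or_pos q with rfl | h
      · exfalso
        have hJ1 : 1 ≤ J := by omega
        have := (hzedge J (by omega)).1
        rw [← hzq, hz0] at this
        exact huv this
      · exact h
    have hJ1 : 1 ≤ J := by omega
    -- β : the repeated color ; α : free at u
    set β := free (z (J-1)) with hβ
    have hcβ : c s(u, z J) = β := (hzedge J hJ1).2.1 |>.trans (by rw [hβ])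
    have hqβ : free (z (q-1)) = β := by
      have h1 : c s(u, z q) = free (z (q-1)) := (hzedge q hq1).2.1
      rw [hzq] at h1
      rw [← h1, hcβ]
    set α := free u with hα
    have hαnot : α ∉ usedAt E' c u := hfree_not u
    have hβused : β ∈ usedAt E' c u := by
      refine mem_usedAt.mpr ⟨s(u, z J), (hzedge J hJ1).1, Sym2.mem_mk_left _ _, hcβ⟩
    have hαβ : α ≠ β := fun h => hαnot (h ▸ hβused)
    set K := kempe E' c α β with hK
    -- determinism: free (z i) = β → i+1-th is z q
    have hdetq : ∀ i, i ≤ J - 1 → free (z i) = β → i = q - 1 ∨ i = J - 1 := by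
      intro i hi hfi
      by_cases hiJ : i = J - 1
      · exact Or.inr hiJ
      · left
        have h1 : stepf (z i) = stepf (z (q-1)) := hstep_det _ _ (by rw [hfi, hqβ])
        rw [hstepfan, hstepfan] at h1
        have h2 : z (i+1) = z ((q-1)+1) := by simpa using h1
        have h3 : (q-1)+1 = q := by omega
        rw [h3] at h2
        have := hzinj (i+1) (by omega) q (by omega) h2
        omega
    -- properties of z (q-1), z (J-1)
    have hzq1u : z (q-1) ≠ u := by
      rcases Nat.eq_zero_or_pos (q-1) with h | h
      · rw [h, hz0]; exact Ne.symm huvne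
      · exact (hzedge (q-1) (by omega)).2.2
    have hzJ1u : z (J-1) ≠ u := by
      rcases Nat.eq_zero_or_pos (J-1) with h | h
      · rw [h, hz0]; exact Ne.symm huvne
      · exact (hzedge (J-1) (by omega)).2.2
    have hq1J1 : q - 1 ≠ J - 1 := by omega
    have hzq1J1 : z (q-1) ≠ z (J-1) := by
      intro h
      exact hq1J1 (hzinj _ (by omega) _ (by omega) h)
    have hβq1 : β ∉ usedAt E' c (z (q-1)) := hqβ ▸ hfree_not (z (q-1))
    have hβJ1 : β ∉ usedAt E' c (z (J-1)) := hβ ▸ hfree_not (z (J-1))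
    -- choose the right endpoint to flip
    -- Subcase analysis
    by_cases hreach : K.Reachable u (z (q-1))
    · -- flip component of z (J-1)
      have hnotreach : ¬ K.Reachable u (z (J-1)) := by
        intro hreach2
        exact no_three_endpoints hnd hp hαβ (Ne.symm hzq1u) (Ne.symm hzJ1u) hzq1J1
          hαnot hβq1 hβJ1 hreach hreach2
      set S : Set V := {w | K.Reachable (z (J-1)) w} with hS
      have hSclosed : KClosed E' c α β S := by
        intro x y hxy hx
        exact Set.mem_setOf.mpr ((Set.mem_setOf.mp hx).trans hxy.reachable)
      have huS : u ∉ S := by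
        intro h
        exact hnotreach (Set.mem_setOf.mp h).symm
      set c₂ := flip E' c α β S with hc₂
      have hp₂ : Proper E' c₂ := flip_proper hnd hSclosed hp hαβ
      have hlt₂ : ∀ e ∈ E', c₂ e < N := flip_lt (hfree_lt u) (hfree_lt _) hlt
      -- z q not in S, z (q-1) not in S
      have hzqS : z q ∉ S := by
        intro h
        apply hnotreach
        have hadj : K.Adj u (z q) := by
          refine ⟨Ne.symm (hzedge q hq1).2.2, ?_, Or.inr ?_⟩
          · exact (hzedge q hq1).1
          · rw [hzq]; exact hcβ
        exact (hadj.reachable).trans (Set.mem_setOf.mp h).symm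
      have hzq1S : z (q-1) ∉ S := by
        intro h
        exact hnotreach (hreach.trans (Set.mem_setOf.mp h).symm)
      -- apply rotation with P = J-1, γ i = free z i except last = α
      set γ : ℕ → ℕ := fun i => if i = J - 1 then α else free (z i) with hγ
      refine rotate E' c₂ N u v hp₂ hlt₂ huv (J-1) z γ hz0 ?_ hzinj ?_ ?_ ?_ ?_ ?_
      · intro i hi
        rcases Nat.eq_zero_or_pos i with rfl | h
        · rw [hz0]; exact Ne.symm huvne
        · exact (hzedge i (by omega)).2.2
      · intro i h1 hi
        exact (hzedge i h1).1
      · intro i hi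
        have hIne : i ≠ J - 1 := by omega
        simp only [hγ]
        simp only [if_neg hIne]
        have hcol : c s(u, z (i+1)) = free (z i) := (hzedge (i+1) (by omega)).2.1
        by_cases hiq : i = q - 1
        · -- edge colored β but not flipped since both endpoints not in S
          subst hiq
          have h3 : (q-1)+1 = q := by omega
          rw [h3]
          rw [hc₂]
          rw [flip_eq_of_not_touch hnd hSclosed huS
            (hzedge q hq1).1 (Sym2.mem_mk_left _ _)]
          rw [h3] at hcol
          exact hcol
        · -- color is neither α nor β : flip fixes it
          have hne1 : free (z i) ≠ α := by
            intro h
            apply hαnot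
            rw [← h]
            exact hstep_used _ _ (hstepfan i)
          have hne2 : free (z i) ≠ β := by
            intro h
            rcases hdetq i (by omega) h with h' | h'
            · exact hiq h'
            · exact hIne h'
          rw [hc₂, flip_eq_of_color_not (by rw [hcol]; push_neg; exact ⟨hne1, hne2⟩), hcol]
      · intro i hi
        simp only [hγ]
        by_cases hiJ : i = J - 1
        · subst hiJ
          simp only [if_pos rfl]
          rw [hc₂]
          exact not_used_flip_alpha hαβ (Set.mem_setOf.mpr (SimpleGraph.Reachable.refl _)) hβJ1
        · simp only [if_neg hiJ]
          have hne1 : free (z i) ≠ α := by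
            intro h
            apply hαnot
            rw [← h]
            exact hstep_used _ _ (hstepfan i)
          by_cases hiq : i = q - 1
          · subst hiq
            rw [hqβ, hc₂]
            exact not_used_flip_of_not_mem_S hnd hSclosed hzq1S hβq1
          · have hne2 : free (z i) ≠ β := by
              intro h
              rcases hdetq i (by omega) h with h' | h'
              · exact hiq h'
              · exact hiJ h'
            rw [hc₂]
            exact not_used_flip_other hne1 hne2 (hfree_not (z i))
      · simp only [hγ, if_pos]
        rw [hc₂]
        exact not_used_flip_of_not_mem_S hnd hSclosed huS hαnot
      · intro i hi
        simp only [hγ]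
        split_ifs
        · exact hfree_lt u
        · exact hfree_lt (z i)
    · -- flip component of z (q-1), rotate prefix up to q-1
      set S : Set V := {w | K.Reachable (z (q-1)) w} with hS
      have hSclosed : KClosed E' c α β S := by
        intro x y hxy hx
        exact Set.mem_setOf.mpr ((Set.mem_setOf.mp hx).trans hxy.reachable)
      have huS : u ∉ S := by
        intro h
        exact hreach (Set.mem_setOf.mp h).symm
      set c₂ := flip E' c α β S with hc₂
      have hp₂ : Proper E' c₂ := flip_proper hnd hSclosed hp hαβ
      have hlt₂ : ∀ e ∈ E', c₂ e < N := flip_lt (hfree_lt u) (hfree_lt _) hlt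
      set γ : ℕ → ℕ := fun i => if i = q - 1 then α else free (z i) with hγ
      refine rotate E' c₂ N u v hp₂ hlt₂ huv (q-1) z γ hz0 ?_ ?_ ?_ ?_ ?_ ?_ ?_
      · intro i hi
        rcases Nat.eq_zero_or_pos i with rfl | h
        · rw [hz0]; exact Ne.symm huvne
        · exact (hzedge i (by omega)).2.2
      · intro i hi j hj hij
        exact hzinj i (by omega) j (by omega) hij
      · intro i h1 hi
        exact (hzedge i h1).1
      · intro i hi
        have hIne : i ≠ q - 1 := by omega
        simp only [hγ]
        simp only [if_neg hIne]
        have hcol : c s(u, z (i+1)) = free (z i) := (hzedge (i+1) (by omega)).2.1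
        have hne1 : free (z i) ≠ α := by
          intro h
          apply hαnot
          rw [← h]
          exact hstep_used _ _ (hstepfan i)
        have hne2 : free (z i) ≠ β := by
          intro h
          rcases hdetq i (by omega) h with h' | h'
          · exact hIne h'
          · omega
        rw [hc₂, flip_eq_of_color_not (by rw [hcol]; push_neg; exact ⟨hne1, hne2⟩), hcol]
      · intro i hi
        simp only [hγ]
        by_cases hiq : i = q - 1
        · subst hiq
          simp only [if_pos rfl]
          rw [hc₂]
          exact not_used_flip_alpha hαβ (Set.mem_setOf.mpr (SimpleGraph.Reachable.refl _)) hβq1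
        · simp only [if_neg hiq]
          have hne1 : free (z i) ≠ α := by
            intro h
            apply hαnot
            rw [← h]
            exact hstep_used _ _ (hstepfan i)
          have hne2 : free (z i) ≠ β := by
            intro h
            rcases hdetq i (by omega) h with h' | h'
            · exact hiq h'
            · omega
          rw [hc₂]
          exact not_used_flip_other hne1 hne2 (hfree_not (z i))
      · simp only [hγ, if_pos]
        rw [hc₂]
        exact not_used_flip_of_not_mem_S hnd hSclosed huS hαnot
      · intro i hi
        simp only [hγ]
        split_ifs
        · exact hfree_lt u
        · exact hfree_lt (z i)

end VizingAux

namespace VizingAux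

open Finset

variable {V : Type*} [DecidableEq V] [Fintype V]

lemma degE_mono {E E' : Finset (Sym2 V)} (h : E' ⊆ E) (v : V) : degE E' v ≤ degE E v :=
  Finset.card_le_card (Finset.filter_subset_filter _ h)

theorem vizing (E : Finset (Sym2 V)) (N : ℕ) (hnd : ∀ e ∈ E, ¬ e.IsDiag)
    (hdeg : ∀ w, degE E w < N) :
    ∃ c : Sym2 V → ℕ, Proper E c ∧ ∀ e ∈ E, c e < N := by
  classical
  induction E using Finset.strongInduction with
  | _ E ih =>
    rcases E.eq_empty_or_nonempty with rfl | ⟨e, he⟩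
    · exact ⟨fun _ => 0, fun e he => absurd he (by simp), fun e he => absurd he (by simp)⟩
    · obtain ⟨u, w, rfl⟩ : ∃ u w, e = s(u,w) := by
        induction e with
        | _ x y => exact ⟨x, y, rfl⟩
      have huw : u ≠ w := by
        intro h
        exact hnd _ he (by rw [h]; exact Sym2.mk_isDiag_iff.mpr rfl)
      set E' := E.erase s(u,w) with hE'
      have hsub : E' ⊆ E := Finset.erase_subset _ _
      have hss : E' ⊂ E := Finset.erase_ssubset he
      obtain ⟨c, hc, hcl⟩ := ih E' hss (fun e he' => hnd e (hsub he'))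
        (fun v => lt_of_le_of_lt (degE_mono hsub v) (hdeg v))
      have huv' : s(u,w) ∉ E' := Finset.notMem_erase _ _
      obtain ⟨c', hp', hl'⟩ := extend E' c N u w huw (fun e he' => hnd e (hsub he'))
        hc hcl huv' (fun x => lt_of_le_of_lt (degE_mono hsub x) (hdeg x))
      rw [Finset.insert_erase he] at hp' hl'
      exact ⟨c', hp', hl'⟩

/-- averaging: top D classes carry at least a D/N fraction -/
lemma top_classes (g : ℕ → ℕ) (N D : ℕ) (hD : 0 < D) (hDN : D ≤ N) :
    ∃ S ⊆ Finset.range N, #S = D ∧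
      (∑ i ∈ Finset.range N, g i) * D ≤ (∑ i ∈ S, g i) * N := by
  classical
  have hne : ((Finset.range N).powersetCard D).Nonempty :=
    Finset.powersetCard_nonempty.mpr (by simpa using hDN)
  obtain ⟨S, hSmem, hSmax⟩ := Finset.exists_max_image _ (fun S => ∑ i ∈ S, g i) hne
  rw [Finset.mem_powersetCard] at hSmem
  obtain ⟨hSsub, hScard⟩ := hSmem
  refine ⟨S, hSsub, hScard, ?_⟩
  have hSne : S.Nonempty := Finset.card_pos.mp (by omega)
  obtain ⟨i₀, hi₀S, hi₀min⟩ := Finset.exists_min_image S g hSne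
  have hout : ∀ j ∈ Finset.range N \ S, g j ≤ g i₀ := by
    intro j hj
    rw [Finset.mem_sdiff] at hj
    have hS' : insert j (S.erase i₀) ∈ (Finset.range N).powersetCard D := by
      rw [Finset.mem_powersetCard]
      constructor
      · intro x hx
        rcases Finset.mem_insert.mp hx with rfl | hx
        · exact hj.1
        · exact hSsub (Finset.mem_of_mem_erase hx)
      · rw [Finset.card_insert_of_notMem (fun hx => hj.2 (Finset.mem_of_mem_erase hx)),
          Finset.card_erase_of_mem hi₀S, hScard]
        omega
    have := hSmax _ hS'
    rw [Finset.sum_insert (fun hx => hj.2 (Finset.mem_of_mem_erase hx))] at this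
    have herase := Finset.add_sum_erase S g hi₀S
    omega
  have h1 : ∑ i ∈ Finset.range N \ S, g i ≤ (N - D) * g i₀ := by
    have := Finset.sum_le_card_nsmul (Finset.range N \ S) g (g i₀) hout
    rwa [Finset.card_sdiff_of_subset hSsub, Finset.card_range, hScard, smul_eq_mul] at this
  have h2 : D * g i₀ ≤ ∑ i ∈ S, g i := by
    have := Finset.card_nsmul_le_sum S g (g i₀) (fun x hx => hi₀min x hx)
    rwa [hScard, smul_eq_mul] at this
  have h3 : ∑ i ∈ Finset.range N, g i = ∑ i ∈ Finset.range N \ S, g i + ∑ i ∈ S, g i :=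
    (Finset.sum_sdiff hSsub).symm
  have h4 : (∑ i ∈ Finset.range N \ S, g i) * D ≤ (N - D) * (∑ i ∈ S, g i) := by
    calc (∑ i ∈ Finset.range N \ S, g i) * D ≤ ((N - D) * g i₀) * D :=
          Nat.mul_le_mul_right _ h1
      _ = (N - D) * (D * g i₀) := by ring
      _ ≤ (N - D) * (∑ i ∈ S, g i) := Nat.mul_le_mul_left _ h2
  calc (∑ i ∈ Finset.range N, g i) * D
      = (∑ i ∈ Finset.range N \ S, g i) * D + (∑ i ∈ S, g i) * D := by rw [h3]; ring
    _ ≤ (N - D) * (∑ i ∈ S, g i) + (∑ i ∈ S, g i) * D := by omega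
    _ = (∑ i ∈ S, g i) * (N - D + D) := by ring
    _ = (∑ i ∈ S, g i) * N := by rw [Nat.sub_add_cancel hDN]

end VizingAux

open Finset

theorem stmt_2 {V : Type*} [Fintype V] (H : SimpleGraph V) (m : ℕ) (hm : 0 < m)
    (hme : m ≤ H.edgeFinset.card) :
    ∃ H' : SimpleGraph V, H' ≤ H ∧ H'.edgeFinset.card = m ∧
      (((H \ H').maxDegree : ℝ)) ≤
        ((H.maxDegree : ℝ) + 1) * ((H.edgeFinset.card : ℝ) - (m : ℝ)) / (H.edgeFinset.card : ℝ)
          + 1 := by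
  classical
  open VizingAux in
  set E := H.edgeFinset with hE
  set eN := E.card with heN
  set Δ := H.maxDegree with hΔ
  set N := Δ + 1 with hN
  have hE0 : 0 < eN := lt_of_lt_of_le hm hme
  have hnd : ∀ e ∈ E, ¬ e.IsDiag := fun e he =>
    H.not_isDiag_of_mem_edgeSet (SimpleGraph.mem_edgeFinset.mp he)
  have hdegE : ∀ w, degE E w = H.degree w := by
    intro w
    rw [degE, hE, ← SimpleGraph.incidenceFinset_eq_filter,
      SimpleGraph.card_incidenceFinset_eq_degree]
  have hdeg : ∀ w, degE E w < N := by
    intro w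
    rw [hdegE w, hN]
    exact lt_of_le_of_lt (H.degree_le_maxDegree w) (Nat.lt_succ_self _)
  obtain ⟨c, hp, hcl⟩ := vizing E N hnd hdeg
  set k := eN - m with hk
  set D := k * N / eN + 1 with hD
  -- obtain K with k edges and all degrees ≤ D
  have hKex : ∃ K : Finset (Sym2 V), K ⊆ E ∧ #K = k ∧ ∀ v, degE K v ≤ D := by
    by_cases hcase : D ≤ Δ
    · -- use top D color classes
      obtain ⟨S, hSsub, hScard, hStop⟩ := top_classes
        (fun i => #(E.filter (fun e => c e = i))) N D (Nat.succ_pos _)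
        (le_trans hcase (Nat.le_succ Δ))
      have hsumE : ∑ i ∈ Finset.range N, #(E.filter (fun e => c e = i)) = eN :=
        (Finset.card_eq_sum_card_fiberwise
          (fun e he => Finset.mem_range.mpr (hcl e he))).symm
      set EK := E.filter (fun e => c e ∈ S) with hEK
      have hEKcard : #EK = ∑ i ∈ S, #(E.filter (fun e => c e =  i)) := by
        have h1 : #EK = ∑ i ∈ S, #(EK.filter (fun e => c e = i)) :=
          Finset.card_eq_sum_card_fiberwise (fun x hx => (Finset.mem_filter.mp hx).2)
        rw [h1]
        refine Finset.sum_congr rfl ?_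
        intro i hi
        congr 1
        ext e
        simp only [hEK, Finset.mem_filter, and_assoc]
        constructor
        · rintro ⟨h1, _, h3⟩; exact ⟨h1, h3⟩
        · rintro ⟨h1, h3⟩; exact ⟨h1, h3 ▸ hi, h3⟩
      have hklt : k < #EK := by
        have hmod : k * N % eN < eN := Nat.mod_lt _ hE0
        have hdm : k * N / eN * eN + k * N % eN = k * N := Nat.div_add_mod' _ _
        have h1 : k * N < D * eN := by
          rw [hD, add_mul, one_mul]
          omega
        have h2 : eN * D ≤ #EK * N := by
          rw [hEKcard]
          rw [hsumE, mul_comm eN D, mul_comm D eN] at hStop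
          exact hStop
        have h3 : k * N < #EK * N := by
          calc k * N < D * eN := h1
          _ = eN * D := by ring
          _ ≤ #EK * N := h2
        exact Nat.lt_of_mul_lt_mul_right h3
      obtain ⟨K, hKsub, hKcard⟩ := Finset.exists_subset_card_eq (le_of_lt hklt)
      refine ⟨K, le_trans hKsub (Finset.filter_subset _ _), hKcard, ?_⟩
      intro v
      have hKE : K ⊆ E := le_trans hKsub (Finset.filter_subset _ _)
      calc degE K v ≤ #S := by
            refine Finset.card_le_card_of_injOn c ?_ ?_
            · intro e he
              rw [Finset.mem_coe, Finset.mem_filter] at he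
              exact (Finset.mem_filter.mp (hKsub he.1)).2
            · intro e he f hf hcef
              simp only [Finset.coe_filter, Set.mem_setOf_eq, Finset.mem_filter] at he hf
              exact proper_eq_of_same_color hp (hKE he.1) (hKE hf.1) he.2 hf.2 hcef
      _ = D := hScard
    · -- trivial: any k-subset works since Δ < D
      have hkle : k ≤ eN := by omega
      obtain ⟨K, hKsub, hKcard⟩ := Finset.exists_subset_card_eq hkle
      refine ⟨K, hKsub, hKcard, ?_⟩
      intro v
      calc degE K v ≤ degE E v := degE_mono hKsub v
      _ = H.degree v := hdegE v
      _ ≤ Δ := H.degree_le_maxDegree v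
      _ ≤ D := by omega
  obtain ⟨K, hKsub, hKcard, hKdeg⟩ := hKex
  refine ⟨H.deleteEdges ↑K, SimpleGraph.deleteEdges_le _, ?_, ?_⟩
  · -- edge count
    have hEF : (H.deleteEdges ↑K).edgeFinset = E \ K := by
      ext e
      induction e with
      | _ x y =>
        simp only [SimpleGraph.mem_edgeFinset, SimpleGraph.mem_edgeSet,
          SimpleGraph.deleteEdges_adj, Finset.mem_sdiff, Finset.mem_coe, hE]
    have hEF' : #(E \ K) = m := by
      rw [Finset.card_sdiff_of_subset hKsub, ← heN, hKcard]
      omega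
    convert (congrArg Finset.card hEF).trans hEF'
  · -- degree bound
    have hmax : (H \ H.deleteEdges ↑K).maxDegree ≤ D := by
      refine SimpleGraph.maxDegree_le_of_forall_degree_le _ _ ?_
      intro v
      rw [← SimpleGraph.card_neighborFinset_eq_degree]
      calc #((H \ H.deleteEdges ↑K).neighborFinset v) ≤ degE K v := by
            refine Finset.card_le_card_of_injOn (fun n => s(v,n)) ?_ ?_
            · intro n hn
              rw [Finset.mem_coe, SimpleGraph.mem_neighborFinset, SimpleGraph.sdiff_adj,
                SimpleGraph.deleteEdges_adj] at hn
              have hKn : s(v,n) ∈ K := by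
                by_contra hns
                exact hn.2 ⟨hn.1, hns⟩
              exact Finset.mem_filter.mpr ⟨hKn, Sym2.mem_mk_left _ _⟩
            · intro a _ b _ hab
              exact Sym2.congr_right.mp hab
      _ ≤ D := hKdeg v
    have hDle : ((D : ℝ)) ≤ ((Δ : ℝ) + 1) * ((eN : ℝ) - (m : ℝ)) / (eN : ℝ) + 1 := by
      have hkc : ((k : ℕ) : ℝ) = (eN : ℝ) - (m : ℝ) := by
        rw [hk, Nat.cast_sub (by omega : m ≤ eN)]
      have h1 : ((k * N / eN : ℕ) : ℝ) ≤ ((eN : ℝ) - (m : ℝ)) * ((Δ : ℝ) + 1) / (eN : ℝ) := by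
        calc ((k * N / eN : ℕ) : ℝ) ≤ ((k * N : ℕ) : ℝ) / ((eN : ℕ) : ℝ) := Nat.cast_div_le
        _ = ((eN : ℝ) - (m : ℝ)) * ((Δ : ℝ) + 1) / (eN : ℝ) := by
            rw [Nat.cast_mul, hkc, hN]
            push_cast
            ring
      have hDc : ((D : ℕ) : ℝ) = ((k * N / eN : ℕ) : ℝ) + 1 := by
        rw [hD]
        push_cast
        ring
      have h2 : ((Δ : ℝ) + 1) * ((eN : ℝ) - (m : ℝ)) / (eN : ℝ)
          = ((eN : ℝ) - (m : ℝ)) * ((Δ : ℝ) + 1) / (eN : ℝ) := by ring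
      rw [hDc, h2]
      linarith
    exact le_trans (le_of_eq (by congr)) (calc (((H \ H.deleteEdges ↑K).maxDegree : ℝ)) ≤ (D : ℝ) := by exact_mod_cast hmax
      _ ≤ _ := hDle)
end

section
/- Let n ≥ 2 be an even integer. Then the edge set of the complete graph K_n can be decomposed into ⌈log₂ n⌉ edge-disjoint spanning subgraphs, each of which is regular and bipartite. -/
open scoped Classical

open SimpleGraph

def AdjGood {V : Type} [Fintype V] {k : ℕ} (Hs : Fin k → SimpleGraph V) : Prop :=
  (∀ i j, i ≠ j → ∀ x y : V, (Hs i).Adj x y → ¬ (Hs j).Adj x y) ∧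
  (∀ x y : V, x ≠ y → ∃ i, (Hs i).Adj x y) ∧
  (∀ i, (Hs i).Colorable 2) ∧
  (∀ i, ∃ r, (Hs i).IsRegularOfDegree r)

def Spec (n : ℕ) : Prop :=
  ∃ Hs : Fin (Nat.clog 2 n) → SimpleGraph (Fin n),
      (∀ i j, i ≠ j → Disjoint (Hs i).edgeSet (Hs j).edgeSet) ∧
      (⋃ i, (Hs i).edgeSet) = (⊤ : SimpleGraph (Fin n)).edgeSet ∧
      (∀ i, (Hs i).Colorable 2) ∧
      (∀ i, ∃ r, (Hs i).IsRegularOfDegree r)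

lemma transfer {V : Type} [Fintype V] {N : ℕ} (e : V ≃ Fin N)
    {k : ℕ} (hk : k = Nat.clog 2 N)
    (Hs : Fin k → SimpleGraph V) (hg : AdjGood Hs) : Spec N := by
  obtain ⟨hdisj, hcov, hcol, hreg⟩ := hg
  subst hk
  refine ⟨fun i => SimpleGraph.comap e.symm (Hs i), ?_, ?_, ?_, ?_⟩
  · intro i j hij
    rw [Set.disjoint_left]
    intro s hs hs'
    induction s using Sym2.ind with
    | _ x y =>
      rw [SimpleGraph.mem_edgeSet] at hs hs'
      exact hdisj i j hij _ _ hs hs'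
  · ext s
    induction s using Sym2.ind with
    | _ x y =>
      simp only [Set.mem_iUnion, SimpleGraph.mem_edgeSet, SimpleGraph.comap_adj,
        SimpleGraph.top_adj]
      constructor
      · rintro ⟨i, hi⟩
        intro hxy
        exact hi.ne (by rw [hxy])
      · intro hxy
        exact hcov _ _ (fun h => hxy (by simpa using congrArg e h))
  · intro i
    obtain ⟨C⟩ := hcol i
    exact ⟨SimpleGraph.Coloring.mk (fun w => C (e.symm w)) (fun h => C.valid h)⟩
  · intro i
    obtain ⟨r, hr⟩ := hreg i
    refine ⟨r, fun w => ?_⟩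
    have hnb : (SimpleGraph.comap e.symm (Hs i)).neighborFinset w
        = ((Hs i).neighborFinset (e.symm w)).map e.toEmbedding := by
      ext y
      rw [Finset.mem_map_equiv]
      simp [SimpleGraph.mem_neighborFinset]
    beta_reduce
    rw [SimpleGraph.degree]
    refine (congrArg Finset.card hnb).trans ?_
    rw [Finset.card_map]
    exact hr (e.symm w)

lemma spec_good {N : ℕ} (h : Spec N) :
    ∃ Hs : Fin (Nat.clog 2 N) → SimpleGraph (Fin N), AdjGood Hs := by
  obtain ⟨Hs, hdisj, hcov, hcol, hreg⟩ := h
  refine ⟨Hs, ?_, ?_, hcol, hreg⟩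
  · intro i j hij x y hxy hxy'
    exact Set.disjoint_left.mp (hdisj i j hij)
      (SimpleGraph.mem_edgeSet _ |>.mpr hxy) (SimpleGraph.mem_edgeSet _ |>.mpr hxy')
  · intro x y hxy
    have hmem : s(x, y) ∈ (⊤ : SimpleGraph (Fin N)).edgeSet := by
      rw [SimpleGraph.mem_edgeSet]; exact hxy
    rw [← hcov, Set.mem_iUnion] at hmem
    obtain ⟨i, hi⟩ := hmem
    exact ⟨i, (SimpleGraph.mem_edgeSet _).mp hi⟩

/-- Class 0: cross edges between the two copies, avoiding the identity matching iff ε = 1. -/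
def crossG (m ε : ℕ) : SimpleGraph (Fin m × Bool) where
  Adj x y := x.2 ≠ y.2 ∧ (ε = 1 → x.1 ≠ y.1)
  symm := by
    refine ⟨?_⟩
    rintro x y ⟨h1, h2⟩
    exact ⟨h1.symm, fun hε => (h2 hε).symm⟩
  loopless := by refine ⟨?_⟩; rintro x ⟨h, _⟩; exact h rfl

@[simp] lemma crossG_adj {m ε : ℕ} (x y : Fin m × Bool) :
    (crossG m ε).Adj x y ↔ x.2 ≠ y.2 ∧ (ε = 1 → x.1 ≠ y.1) := Iff.rfl

/-- Lift of a class `D` of `K_M` to the doubled graph: `D` within each copy,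
plus the identity cross edge at `u` whenever `D` joins `u` to the extra vertex (index `m`). -/
def liftG {m M : ℕ} (h : m ≤ M) (D : SimpleGraph (Fin M)) : SimpleGraph (Fin m × Bool) where
  Adj x y := (x.2 = y.2 ∧ D.Adj (Fin.castLE h x.1) (Fin.castLE h y.1)) ∨
             (x.2 ≠ y.2 ∧ x.1 = y.1 ∧ ∃ w : Fin M, (w : ℕ) = m ∧ D.Adj (Fin.castLE h x.1) w)
  symm := by
    refine ⟨?_⟩
    rintro x y (⟨h1, h2⟩ | ⟨h1, h2, w, hw, hadj⟩)
    · exact Or.inl ⟨h1.symm, h2.symm⟩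
    · exact Or.inr ⟨h1.symm, h2.symm, w, hw, h2 ▸ hadj⟩
  loopless := by
    refine ⟨?_⟩
    rintro x (⟨_, h2⟩ | ⟨h1, _⟩)
    · exact D.irrefl h2
    · exact h1 rfl

@[simp] lemma liftG_adj {m M : ℕ} (h : m ≤ M) (D : SimpleGraph (Fin M)) (x y : Fin m × Bool) :
    (liftG h D).Adj x y ↔ (x.2 = y.2 ∧ D.Adj (Fin.castLE h x.1) (Fin.castLE h y.1)) ∨
      (x.2 ≠ y.2 ∧ x.1 = y.1 ∧ ∃ w : Fin M, (w : ℕ) = m ∧ D.Adj (Fin.castLE h x.1) w) := Iff.rfl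


def gmap {m M : ℕ} (u : Fin m) (s : Bool) : Fin M → Fin m × Bool :=
  fun w => if h : (w : ℕ) < m then (⟨w, h⟩, s) else (u, !s)

lemma gmap_pos {m M : ℕ} (u : Fin m) (s : Bool) (w : Fin M) (h : (w : ℕ) < m) :
    gmap u s w = (⟨w, h⟩, s) := dif_pos h

lemma gmap_neg {m M : ℕ} (u : Fin m) (s : Bool) (w : Fin M) (h : ¬ (w : ℕ) < m) :
    gmap u s w = (u, !s) := dif_neg h

lemma step {m M k' : ℕ} {ε : ℕ} (hε : ε ≤ 1) (hM : M = m + ε)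
    (Ds : Fin k' → SimpleGraph (Fin M)) (hg : AdjGood Ds) :
    ∃ Hs : Fin (k' + 1) → SimpleGraph (Fin m × Bool), AdjGood Hs := by
  have hle : m ≤ M := by omega
  obtain ⟨hdisj, hcov, hcol, hreg⟩ := hg
  have fact0 : ∀ w : Fin M, (w : ℕ) = m → ε = 1 := by
    intro w hw
    have := w.isLt
    omega
  refine ⟨Fin.cases (crossG m ε) (fun j => liftG hle (Ds j)), ?_, ?_, ?_, ?_⟩
  · -- disjointness
    intro i j hij x y hxy hxy'
    rcases Fin.eq_zero_or_eq_succ i with rfl | ⟨a, rfl⟩ <;>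
      rcases Fin.eq_zero_or_eq_succ j with rfl | ⟨b, rfl⟩
    · exact hij rfl
    · simp only [Fin.cases_zero, Fin.cases_succ, crossG_adj, liftG_adj] at hxy hxy'
      rcases hxy with ⟨hst, himp⟩
      rcases hxy' with ⟨heq, -⟩ | ⟨-, heq1, w, hw, -⟩
      · exact hst heq
      · exact himp (fact0 w hw) heq1
    · simp only [Fin.cases_zero, Fin.cases_succ, crossG_adj, liftG_adj] at hxy hxy'
      rcases hxy' with ⟨hst, himp⟩
      rcases hxy with ⟨heq, -⟩ | ⟨-, heq1, w, hw, -⟩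
      · exact hst heq
      · exact himp (fact0 w hw) heq1
    · have hab : a ≠ b := fun h => hij (by rw [h])
      simp only [Fin.cases_succ, liftG_adj] at hxy hxy'
      rcases hxy with ⟨hst, hadj⟩ | ⟨hst, huv, w, hw, hadj⟩ <;>
        rcases hxy' with ⟨hst', hadj'⟩ | ⟨hst', huv', w', hw', hadj'⟩
      · exact hdisj a b hab _ _ hadj hadj'
      · exact hst' hst
      · exact hst hst'
      · have : w = w' := Fin.ext (by omega)
        exact hdisj a b hab _ _ hadj (this ▸ hadj')
  · -- coverage
    rintro ⟨u, s⟩ ⟨v, t⟩ hxy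
    by_cases hst : s = t
    · have huv : u ≠ v := fun h => hxy (by rw [h, hst])
      have hc : Fin.castLE hle u ≠ Fin.castLE hle v := by
        simpa [Fin.castLE_inj] using huv
      obtain ⟨j, hj⟩ := hcov _ _ hc
      refine ⟨j.succ, ?_⟩
      simp only [Fin.cases_succ, liftG_adj]
      exact Or.inl ⟨hst, hj⟩
    · by_cases hε1 : ε = 1
      · by_cases huv : u = v
        · have hmM : m < M := by omega
          have hne : Fin.castLE hle u ≠ (⟨m, hmM⟩ : Fin M) := by
            intro h
            have := congrArg Fin.val h
            simp only [Fin.coe_castLE] at this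
            have := u.isLt
            omega
          obtain ⟨j, hj⟩ := hcov _ _ hne
          refine ⟨j.succ, ?_⟩
          simp only [Fin.cases_succ, liftG_adj]
          exact Or.inr ⟨hst, huv, ⟨m, hmM⟩, rfl, hj⟩
        · exact ⟨0, ⟨hst, fun _ => huv⟩⟩
      · exact ⟨0, ⟨hst, fun h => absurd h hε1⟩⟩
  · -- colorability
    intro i
    rcases Fin.eq_zero_or_eq_succ i with rfl | ⟨a, rfl⟩
    · refine ⟨SimpleGraph.Coloring.mk (fun x => if x.2 then 0 else 1) ?_⟩
      rintro ⟨u, s⟩ ⟨v, t⟩ hadj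
      simp only [Fin.cases_zero, crossG_adj] at hadj
      rcases hadj with ⟨hst, -⟩
      cases s <;> cases t <;> simp_all
    · obtain ⟨C⟩ := hcol a
      refine ⟨SimpleGraph.Coloring.mk
        (fun x => C (Fin.castLE hle x.1) + (if x.2 then 1 else 0)) ?_⟩
      rintro ⟨u, s⟩ ⟨v, t⟩ hadj
      simp only [Fin.cases_succ, liftG_adj] at hadj
      rcases hadj with ⟨hst, hadj⟩ | ⟨hst, huv, w, hw, hadj⟩
      · have hC := C.valid hadj
        subst hst
        intro h
        exact hC (add_right_cancel h)
      · subst huv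
        have hne : (if s then (1 : Fin 2) else 0) ≠ (if t then 1 else 0) := by
          cases s <;> cases t <;> simp_all
        exact fun h => hne (add_left_cancel h)
  · -- regularity
    intro i
    rcases Fin.eq_zero_or_eq_succ i with rfl | ⟨a, rfl⟩
    · refine ⟨m - ε, ?_⟩
      simp only [Fin.cases_zero]
      rintro ⟨u, s⟩
      have hnb : (crossG m ε).neighborFinset (u, s)
          = (Finset.univ.filter (fun v : Fin m => ε = 1 → u ≠ v)).image (fun v => (v, !s)) := by
        ext ⟨v, t⟩
        simp only [SimpleGraph.mem_neighborFinset, crossG_adj, Finset.mem_image,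
          Finset.mem_filter, Finset.mem_univ, true_and]
        constructor
        · rintro ⟨hst, h⟩
          refine ⟨v, h, ?_⟩
          cases s <;> cases t <;> simp_all
        · rintro ⟨v', h, heq⟩
          rw [Prod.mk.injEq] at heq
          obtain ⟨rfl, rfl⟩ := heq
          exact ⟨by cases s <;> simp, h⟩
      have hinj : Function.Injective (fun v : Fin m => (v, !s)) := by
        intro a b h
        exact congrArg Prod.fst h
      refine Eq.trans (SimpleGraph.card_neighborFinset_eq_degree _ _).symm ?_
      refine (congrArg Finset.card hnb).trans ?_
      rw [Finset.card_image_of_injective _ hinj]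
      rcases Nat.le_one_iff_eq_zero_or_eq_one.mp hε with rfl | rfl
      · simp
      · have : (Finset.univ.filter (fun v : Fin m => (1:ℕ) = 1 → u ≠ v))
            = Finset.univ.erase u := by
          ext v
          simp [eq_comm, Ne]
        rw [this, Finset.card_erase_of_mem (Finset.mem_univ u)]
        simp
    · obtain ⟨r, hr⟩ := hreg a
      refine ⟨r, ?_⟩
      simp only [Fin.cases_succ]
      rintro ⟨u, s⟩
      have hnb : (liftG hle (Ds a)).neighborFinset (u, s)
          = ((Ds a).neighborFinset (Fin.castLE hle u)).image (gmap u s) := by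
        ext ⟨v, t⟩
        simp only [SimpleGraph.mem_neighborFinset, liftG_adj, Finset.mem_image]
        constructor
        · rintro (⟨hst, hadj⟩ | ⟨hst, huv, w, hw, hadj⟩)
          · refine ⟨Fin.castLE hle v, hadj, ?_⟩
            have hv : ((Fin.castLE hle v : Fin M) : ℕ) < m := v.isLt
            rw [gmap_pos u s _ hv]
            rw [Prod.mk.injEq]
            exact ⟨Fin.ext rfl, hst⟩
          · refine ⟨w, hadj, ?_⟩
            rw [gmap_neg u s w (by omega)]
            rw [Prod.mk.injEq]
            exact ⟨huv, by cases s <;> cases t <;> simp_all⟩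
        · rintro ⟨w, hadj, heq⟩
          by_cases hw : (w : ℕ) < m
          · rw [gmap_pos u s w hw, Prod.mk.injEq] at heq
            obtain ⟨rfl, rfl⟩ := heq
            refine Or.inl ⟨rfl, ?_⟩
            have : Fin.castLE hle (⟨(w : ℕ), hw⟩ : Fin m) = w := Fin.ext rfl
            rw [this]
            exact hadj
          · rw [gmap_neg u s w hw, Prod.mk.injEq] at heq
            obtain ⟨rfl, rfl⟩ := heq
            have hwm : (w : ℕ) = m := by
              have := w.isLt
              omega
            exact Or.inr ⟨by cases s <;> simp, rfl, w, hwm, hadj⟩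
      have hinj : Function.Injective (gmap u s : Fin M → Fin m × Bool) := by
        intro w1 w2 h
        by_cases h1 : (w1 : ℕ) < m <;> by_cases h2 : (w2 : ℕ) < m
        · rw [gmap_pos u s w1 h1, gmap_pos u s w2 h2, Prod.mk.injEq, Fin.mk.injEq] at h
          exact Fin.ext h.1
        · rw [gmap_pos u s w1 h1, gmap_neg u s w2 h2, Prod.mk.injEq] at h
          exact absurd h.2 (by cases s <;> simp)
        · rw [gmap_neg u s w1 h1, gmap_pos u s w2 h2, Prod.mk.injEq] at h
          exact absurd h.2 (by cases s <;> simp)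
        · have e1 := w1.isLt
          have e2 := w2.isLt
          exact Fin.ext (by omega)
      refine Eq.trans (SimpleGraph.card_neighborFinset_eq_degree _ _).symm ?_
      refine (congrArg Finset.card hnb).trans ?_
      rw [Finset.card_image_of_injective _ hinj]
      exact hr _

lemma clog_step {m : ℕ} (hm : 2 ≤ m) {ε : ℕ} (hεdef : ε = if Even m then 0 else 1) :
    Nat.clog 2 (m + ε) + 1 = Nat.clog 2 (m + m) := by
  have h2m : Nat.clog 2 (m + m) = Nat.clog 2 m + 1 := by
    rw [Nat.clog_of_two_le one_lt_two (by omega)]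
    congr 2
    omega
  rw [h2m]
  congr 1
  by_cases h : Even m
  · simp [hεdef, h]
  · have hε1 : ε = 1 := by simp [hεdef, h]
    subst hε1
    refine le_antisymm ?_ (Nat.clog_mono_right _ (by omega))
    have h1 : m ≤ 2 ^ Nat.clog 2 m := Nat.le_pow_clog one_lt_two m
    have heven2 : Even (2 ^ Nat.clog 2 m) := by
      have hpos : 1 ≤ Nat.clog 2 m := Nat.clog_pos one_lt_two hm
      exact (Nat.even_pow.mpr ⟨even_two, by omega⟩)
    have hne : m ≠ 2 ^ Nat.clog 2 m := by
      intro he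
      rw [he] at h
      exact h heven2
    exact (Nat.clog_le_iff_le_pow one_lt_two).mpr (by omega)


theorem key : ∀ n : ℕ, 2 ≤ n → Even n → Spec n := by
  intro n
  induction n using Nat.strong_induction_on with
  | _ n ih =>
    intro hn heven
    obtain ⟨m, hmn⟩ := heven
    by_cases hm1 : m = 1
    · -- base case : n = 2
      have hn2 : n = 2 := by omega
      subst hn2
      have hDs : AdjGood (fun i : Fin 0 => (⊥ : SimpleGraph (Fin 1))) :=
        ⟨fun i => i.elim0, fun x y hxy => absurd (Subsingleton.elim x y) hxy,
          fun i => i.elim0, fun i => i.elim0⟩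
      obtain ⟨Hs, hHs⟩ := step (m := 1) (ε := 0) (by norm_num) rfl _ hDs
      have hk : (0 + 1 : ℕ) = Nat.clog 2 2 := by
        rw [Nat.clog_of_two_le one_lt_two le_rfl]
        norm_num
      have hcard : Fintype.card (Fin 1 × Bool) = 2 := by simp
      exact transfer (Fintype.equivFinOfCardEq hcard) hk Hs hHs
    · have hm2 : 2 ≤ m := by omega
      set ε : ℕ := if Even m then 0 else 1 with hεdef
      have hε : ε ≤ 1 := by
        by_cases h : Even m <;> simp [hεdef, h]
      have hMeven : Even (m + ε) := by
        by_cases h : Even m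
        · simpa [hεdef, h] using h
        · have h1 : ε = 1 := by simp [hεdef, h]
          rw [h1]
          exact Nat.even_add_one.mpr h
      have hM2 : 2 ≤ m + ε := by omega
      have hMlt : m + ε < n := by omega
      obtain ⟨Ds, hDs⟩ := spec_good (ih (m + ε) hMlt hM2 hMeven)
      obtain ⟨Hs, hHs⟩ := step hε rfl Ds hDs
      have hclog : Nat.clog 2 (m + ε) + 1 = Nat.clog 2 n := by
        rw [hmn]
        exact clog_step hm2 hεdef
      have hcard : Fintype.card (Fin m × Bool) = n := by
        simp only [Fintype.card_prod, Fintype.card_fin, Fintype.card_bool]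
        omega
      exact transfer (Fintype.equivFinOfCardEq hcard) hclog Hs hHs

theorem stmt_5 (n : ℕ) (hn : 2 ≤ n) (heven : Even n) :
    ∃ Hs : Fin (Nat.clog 2 n) → SimpleGraph (Fin n),
      (∀ i j, i ≠ j → Disjoint (Hs i).edgeSet (Hs j).edgeSet) ∧
      (⋃ i, (Hs i).edgeSet) = (⊤ : SimpleGraph (Fin n)).edgeSet ∧
      (∀ i, (Hs i).Colorable 2) ∧
      (∀ i, ∃ r, (Hs i).IsRegularOfDegree r) := by
  exact key n hn heven
end

section
/- Let H = (X ∪ Y, E) be a finite bipartite graph with parts X and Y, and let f : X ∪ Y → ℕ satisfy f(X) = f(Y), where f(S) = Σ_{v∈S} f(v). Then H has an f-factor (a spanning subgraph in which every vertex v has degree exactly f(v)) if and only if for every S ⊆ X and T ⊆ Y, the number of edges between S and T satisfies e_H(S, T) ≥ f(S) + f(T) - f(X). -/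
open scoped Classical
open Finset SimpleGraph

set_option linter.unusedSectionVars false
set_option linter.unusedVariables false
set_option maxHeartbeats 1000000

section Helpers
variable {V : Type*} [Fintype V]

/-- Edge count between S and T. -/
noncomputable def eCnt (G : SimpleGraph V) (S T : Finset V) : ℕ :=
  ((S ×ˢ T).filter fun p => G.Adj p.1 p.2).card

lemma eCnt_eq_sum (G : SimpleGraph V) (S T : Finset V) :
    eCnt G S T = ∑ a ∈ S, (T.filter (G.Adj a)).card := by
  unfold eCnt
  rw [Finset.card_filter, Finset.sum_product]
  exact Finset.sum_congr rfl fun a _ => (Finset.card_filter _ _).symm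

lemma eCnt_mono_right (G : SimpleGraph V) {S T T' : Finset V} (h : T' ⊆ T) :
    eCnt G S T' ≤ eCnt G S T := by
  apply Finset.card_le_card
  exact Finset.filter_subset_filter _ (Finset.product_subset_product_right h)

lemma eCnt_mono_graph {G G' : SimpleGraph V} (h : G ≤ G') (S T : Finset V) :
    eCnt G S T ≤ eCnt G' S T := by
  apply Finset.card_le_card
  intro p hp
  simp only [Finset.mem_filter] at hp ⊢
  exact ⟨hp.1, h hp.2⟩

lemma eCnt_union_left (G : SimpleGraph V) {S S' : Finset V} (h : Disjoint S S') (T : Finset V) :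
    eCnt G (S ∪ S') T = eCnt G S T + eCnt G S' T := by
  simp only [eCnt_eq_sum]
  exact Finset.sum_union h

lemma eCnt_insert (G : SimpleGraph V) {x : V} {S : Finset V} (h : x ∉ S) (T : Finset V) :
    eCnt G (insert x S) T = (T.filter (G.Adj x)).card + eCnt G S T := by
  simp only [eCnt_eq_sum]
  exact Finset.sum_insert h

lemma eCnt_comm (G : SimpleGraph V) (S T : Finset V) : eCnt G S T = eCnt G T S := by
  unfold eCnt
  apply Finset.card_bij (fun p _ => (p.2, p.1))
  · intro p hp
    simp only [Finset.mem_filter, Finset.mem_product] at hp ⊢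
    exact ⟨⟨hp.1.2, hp.1.1⟩, hp.2.symm⟩
  · intro p hp q hq h
    simpa [Prod.ext_iff, and_comm] using h
  · intro p hp
    simp only [Finset.mem_filter, Finset.mem_product] at hp
    exact ⟨(p.2, p.1), by simp [hp.1.1, hp.1.2, hp.2.symm], rfl⟩

lemma eCnt_union_right (G : SimpleGraph V) {T T' : Finset V} (h : Disjoint T T') (S : Finset V) :
    eCnt G S (T ∪ T') = eCnt G S T + eCnt G S T' := by
  rw [eCnt_comm, eCnt_union_left G h, eCnt_comm G T, eCnt_comm G T']

lemma eCnt_submodular (G : SimpleGraph V) (S S' T T' : Finset V) :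
    eCnt G (S ∪ S') (T ∩ T') + eCnt G (S ∩ S') (T ∪ T') ≤ eCnt G S T + eCnt G S' T' := by
  simp only [eCnt_eq_sum]
  have key : ∀ U : Finset V, ∀ g : V → ℕ,
      ∑ a ∈ U, g a = ∑ a ∈ Finset.univ, if a ∈ U then g a else 0 := by
    intro U g
    rw [Finset.sum_ite_mem, Finset.univ_inter]
  rw [key (S ∪ S'), key (S ∩ S'), key S, key S', ← Finset.sum_add_distrib,
    ← Finset.sum_add_distrib]
  apply Finset.sum_le_sum
  intro a _
  have hmod : ((T ∩ T').filter (G.Adj a)).card + ((T ∪ T').filter (G.Adj a)).card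
      = (T.filter (G.Adj a)).card + (T'.filter (G.Adj a)).card := by
    rw [Finset.filter_inter_distrib, Finset.filter_union, add_comm,
      Finset.card_union_add_card_inter]
  have hm1 : ((T ∩ T').filter (G.Adj a)).card ≤ (T.filter (G.Adj a)).card :=
    Finset.card_le_card (Finset.filter_subset_filter _ Finset.inter_subset_left)
  have hm2 : ((T ∩ T').filter (G.Adj a)).card ≤ (T'.filter (G.Adj a)).card :=
    Finset.card_le_card (Finset.filter_subset_filter _ Finset.inter_subset_right)
  by_cases h1 : a ∈ S <;> by_cases h2 : a ∈ S' <;>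
    simp [h1, h2, Finset.mem_union, Finset.mem_inter] <;> omega

lemma degree_eq_filter (G : SimpleGraph V) (v : V) [Fintype (G.neighborSet v)]
    [DecidablePred (G.Adj v)] :
    G.degree v = (Finset.univ.filter (G.Adj v)).card := by
  rw [SimpleGraph.degree]
  congr 1
  ext u
  simp [SimpleGraph.mem_neighborFinset]

lemma degree_eq_bip {G : SimpleGraph V} {X Y : Finset V} (hdisj : Disjoint X Y)
    (hbip : ∀ u v, G.Adj u v → (u ∈ X ∧ v ∈ Y) ∨ (u ∈ Y ∧ v ∈ X))
    {v : V} (hv : v ∈ X) : G.degree v = (Y.filter (G.Adj v)).card := by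
  rw [degree_eq_filter]
  congr 1
  ext u
  simp only [Finset.mem_filter, Finset.mem_univ, true_and]
  constructor
  · intro h
    refine ⟨?_, h⟩
    rcases hbip v u h with ⟨_, h2⟩ | ⟨h1, _⟩
    · exact h2
    · exact absurd hv (Finset.disjoint_right.mp hdisj h1)
  · exact fun h => h.2

lemma sum_degree_eq {G : SimpleGraph V} {X Y : Finset V} (hdisj : Disjoint X Y)
    (hbip : ∀ u v, G.Adj u v → (u ∈ X ∧ v ∈ Y) ∨ (u ∈ Y ∧ v ∈ X))
    {S : Finset V} (hS : S ⊆ X) : ∑ v ∈ S, G.degree v = eCnt G S Y := by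
  rw [eCnt_eq_sum]
  exact Finset.sum_congr rfl fun v hv => degree_eq_bip hdisj hbip (hS hv)

/-- Decreasing f by one at two distinct points where it is positive. -/
lemma sum_decr {f g : V → ℕ} {x y : V} (hxy : x ≠ y) (hfx : f x ≠ 0) (hfy : f y ≠ 0)
    (hg : ∀ v, g v = if v = x ∨ v = y then f v - 1 else f v)
    (S : Finset V) :
    ∑ v ∈ S, f v = (∑ v ∈ S, g v)
      + ((if x ∈ S then 1 else 0) + (if y ∈ S then 1 else 0)) := by
  have hpt : ∀ v, f v = g v
      + ((if v = x then 1 else 0) + (if v = y then 1 else 0)) := by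
    intro v
    rw [hg v]
    by_cases h1 : v = x
    · subst h1; simp [hxy]; omega
    · by_cases h2 : v = y
      · subst h2; simp [h1]; omega
      · simp [h1, h2]
  calc ∑ v ∈ S, f v = ∑ v ∈ S, (g v
        + ((if v = x then 1 else 0) + (if v = y then 1 else 0))) :=
        Finset.sum_congr rfl fun v _ => hpt v
    _ = _ := by
        rw [Finset.sum_add_distrib, Finset.sum_add_distrib,
          Finset.sum_ite_eq' S x (fun _ => 1), Finset.sum_ite_eq' S y (fun _ => 1)]

/-- Forward direction of Ore's theorem. -/
lemma ore_forward {H : SimpleGraph V} {X Y : Finset V} (hdisj : Disjoint X Y)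
    (hunion : X ∪ Y = Finset.univ)
    (hbip : ∀ u v, H.Adj u v → (u ∈ X ∧ v ∈ Y) ∨ (u ∈ Y ∧ v ∈ X))
    (f : V → ℕ) {H' : SimpleGraph V} (hle : H' ≤ H) (hdeg : ∀ v, H'.degree v = f v)
    {S T : Finset V} (hS : S ⊆ X) (hT : T ⊆ Y) :
    ∑ v ∈ S, f v + ∑ v ∈ T, f v ≤ eCnt H S T + ∑ v ∈ X, f v := by
  have hbip' : ∀ u v, H'.Adj u v → (u ∈ X ∧ v ∈ Y) ∨ (u ∈ Y ∧ v ∈ X) :=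
    fun u v h => hbip u v (hle h)
  have hbip'' : ∀ u v, H'.Adj u v → (u ∈ Y ∧ v ∈ X) ∨ (u ∈ X ∧ v ∈ Y) :=
    fun u v h => (hbip' u v h).symm
  have hYsplit : T ∪ (Y \ T) = Y := Finset.union_sdiff_of_subset hT
  have hXsplit : S ∪ (X \ S) = X := Finset.union_sdiff_of_subset hS
  have hdT : Disjoint T (Y \ T) := Finset.disjoint_sdiff
  have hdS : Disjoint S (X \ S) := Finset.disjoint_sdiff
  have hfS : ∑ v ∈ S, f v = eCnt H' S T + eCnt H' S (Y \ T) := by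
    rw [← eCnt_union_right H' hdT, hYsplit, ← sum_degree_eq hdisj hbip' hS]
    exact Finset.sum_congr rfl fun v _ => (hdeg v).symm
  have hfT : ∑ v ∈ T, f v = eCnt H' S T + eCnt H' (X \ S) T := by
    rw [← eCnt_union_left H' hdS, hXsplit, eCnt_comm,
      ← sum_degree_eq hdisj.symm hbip'' hT]
    exact Finset.sum_congr rfl fun v _ => (hdeg v).symm
  have hfX : ∑ v ∈ X, f v = eCnt H' S T + eCnt H' S (Y \ T) + eCnt H' (X \ S) T
      + eCnt H' (X \ S) (Y \ T) := by
    have h0 : ∑ v ∈ X, f v = eCnt H' X Y := by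
      rw [← sum_degree_eq hdisj hbip' (Finset.Subset.refl X)]
      exact Finset.sum_congr rfl fun v _ => (hdeg v).symm
    rw [h0]
    conv_lhs => rw [← hXsplit, ← hYsplit]
    rw [eCnt_union_left H' hdS, eCnt_union_right H' hdT, eCnt_union_right H' hdT]
    ring
  have hmono : eCnt H' S T ≤ eCnt H S T := eCnt_mono_graph hle S T
  omega

/-- Backward direction: existence of the f-factor, by induction on the total degree. -/
lemma ore_exists {X Y : Finset V} (hdisj : Disjoint X Y) (hunion : X ∪ Y = Finset.univ) :
    ∀ (n : ℕ) (H : SimpleGraph V) (f : V → ℕ),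
    (∀ u v, H.Adj u v → (u ∈ X ∧ v ∈ Y) ∨ (u ∈ Y ∧ v ∈ X)) →
    (∑ v ∈ X, f v = ∑ v ∈ Y, f v) → (∑ v ∈ X, f v = n) →
    (∀ S ⊆ X, ∀ T ⊆ Y, ∑ v ∈ S, f v + ∑ v ∈ T, f v ≤ eCnt H S T + ∑ v ∈ X, f v) →
    ∃ H' : SimpleGraph V, H' ≤ H ∧ ∀ v, H'.degree v = f v := by
  intro n
  induction n with
  | zero =>
    intro H f hbip hf hn hore
    have hz : ∀ v, f v = 0 := by
      intro v
      have hv : v ∈ X ∪ Y := hunion ▸ Finset.mem_univ v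
      rcases Finset.mem_union.mp hv with h | h
      · exact Finset.sum_eq_zero_iff.mp hn v h
      · exact Finset.sum_eq_zero_iff.mp (hf ▸ hn) v h
    exact ⟨⊥, bot_le, fun v => by rw [degree_eq_filter]; simp [hz v, Finset.filter_eq_empty_iff]⟩
  | succ n ih =>
    intro H f hbip hf hn hore
    -- find x ∈ X with f x ≠ 0
    obtain ⟨x, hxX, hfx⟩ : ∃ x ∈ X, f x ≠ 0 := by
      by_contra h
      push_neg at h
      have : ∑ v ∈ X, f v = 0 := Finset.sum_eq_zero fun v hv => h v hv
      omega
    -- tight pairs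
    set P : Finset V × Finset V → Prop := fun p =>
      p.1 ⊆ X ∧ p.2 ⊆ Y ∧ x ∉ p.1 ∧
        ∑ v ∈ p.1, f v + ∑ v ∈ p.2, f v = eCnt H p.1 p.2 + ∑ v ∈ X, f v with hP
    have hPY : P (∅, Y) := by
      refine ⟨Finset.empty_subset _, Finset.Subset.refl _, Finset.notMem_empty _, ?_⟩
      simp [eCnt_eq_sum, hf]
    have hsne : (Finset.univ.filter P).Nonempty :=
      ⟨(∅, Y), Finset.mem_filter.mpr ⟨Finset.mem_univ _, hPY⟩⟩
    obtain ⟨p₀, hp₀mem, hp₀min⟩ := Finset.exists_min_image _ (fun p => p.2.card) hsne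
    obtain ⟨S₀, T₀⟩ := p₀
    obtain ⟨hS₀X, hT₀Y, hxS₀, htight₀⟩ := (Finset.mem_filter.mp hp₀mem).2
    dsimp only at hS₀X hT₀Y hxS₀ htight₀ hp₀min
    -- minimal tight T₀ is contained in every tight T
    have hT₀sub : ∀ S T : Finset V, P (S, T) → T₀ ⊆ T := by
      intro S T hPST
      obtain ⟨hSX, hTY, hxS, htight⟩ := hPST
      dsimp only at hSX hTY hxS htight
      have hq : P (S₀ ∪ S, T₀ ∩ T) := by
        refine ⟨Finset.union_subset hS₀X hSX,
          Finset.inter_subset_left.trans hT₀Y, by simp [hxS₀, hxS], ?_⟩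
        dsimp only
        have hsub := eCnt_submodular H S₀ S T₀ T
        have h1 := hore (S₀ ∪ S) (Finset.union_subset hS₀X hSX) (T₀ ∩ T)
          (Finset.inter_subset_left.trans hT₀Y)
        have h2 := hore (S₀ ∩ S) (Finset.inter_subset_left.trans hS₀X) (T₀ ∪ T)
          (Finset.union_subset hT₀Y hTY)
        have hmS := Finset.sum_union_inter (s₁ := S₀) (s₂ := S) (f := f)
        have hmT := Finset.sum_union_inter (s₁ := T₀) (s₂ := T) (f := f)
        omega
      have hcard := hp₀min (S₀ ∪ S, T₀ ∩ T) (Finset.mem_filter.mpr ⟨Finset.mem_univ _, hq⟩)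
      have heq : T₀ ∩ T = T₀ :=
        Finset.eq_of_subset_of_card_le Finset.inter_subset_left hcard
      intro v hv
      rw [← heq] at hv
      exact (Finset.mem_inter.mp hv).2
    -- choose y
    set T₁ : Finset V := T₀.filter (fun v => f v ≠ 0) with hT₁def
    have hT₁sum : ∑ v ∈ T₁, f v = ∑ v ∈ T₀, f v := Finset.sum_filter_ne_zero T₀
    have hT₁Y : T₁ ⊆ Y := (Finset.filter_subset _ _).trans hT₀Y
    have h3 := hore (insert x S₀) (Finset.insert_subset hxX hS₀X) T₁ hT₁Y
    rw [Finset.sum_insert hxS₀, eCnt_insert H hxS₀] at h3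
    have h4 : eCnt H S₀ T₁ ≤ eCnt H S₀ T₀ := eCnt_mono_right H (Finset.filter_subset _ _)
    have hcardpos : 0 < (T₁.filter (H.Adj x)).card := by omega
    obtain ⟨y, hy⟩ := Finset.card_pos.mp hcardpos
    rw [Finset.mem_filter, hT₁def, Finset.mem_filter] at hy
    obtain ⟨⟨hyT₀, hfy⟩, hadjxy⟩ := hy
    have hyY : y ∈ Y := hT₀Y hyT₀
    have hxy : x ≠ y := fun h => (Finset.disjoint_left.mp hdisj hxX) (h ▸ hyY)
    have hyX : y ∉ X := Finset.disjoint_right.mp hdisj hyY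
    have hxY : x ∉ Y := Finset.disjoint_left.mp hdisj hxX
    -- new graph and degree function
    set H₂ : SimpleGraph V := H.deleteEdges {s(x, y)} with hH₂def
    set f₂ : V → ℕ := fun v => if v = x ∨ v = y then f v - 1 else f v with hf₂def
    have hH₂le : H₂ ≤ H := SimpleGraph.deleteEdges_le _
    have hbip₂ : ∀ u v, H₂.Adj u v → (u ∈ X ∧ v ∈ Y) ∨ (u ∈ Y ∧ v ∈ X) :=
      fun u v h => hbip u v (hH₂le h)
    -- edge count relation
    have heCnt : ∀ S T : Finset V, S ⊆ X → T ⊆ Y →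
        eCnt H₂ S T + (if x ∈ S ∧ y ∈ T then 1 else 0) = eCnt H S T := by
      intro S T hSX hTY
      have hset : (S ×ˢ T).filter (fun p => H₂.Adj p.1 p.2)
          = ((S ×ˢ T).filter (fun p => H.Adj p.1 p.2)).erase (x, y) := by
        ext p
        simp only [Finset.mem_filter, Finset.mem_erase, Finset.mem_product, hH₂def,
          SimpleGraph.deleteEdges_adj, Set.mem_singleton_iff]
        constructor
        · rintro ⟨hp, hadj, hne⟩
          refine ⟨?_, hp, hadj⟩
          intro hpe
          exact hne (by rw [hpe])
        · rintro ⟨hne, hp, hadj⟩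
          refine ⟨hp, hadj, ?_⟩
          intro hs
          rw [Sym2.eq_iff] at hs
          rcases hs with ⟨h1, h2⟩ | ⟨h1, h2⟩
          · exact hne (Prod.ext h1 h2)
          · exact hyX (h1 ▸ hSX hp.1)
      by_cases hmem : x ∈ S ∧ y ∈ T
      · have hin : (x, y) ∈ (S ×ˢ T).filter (fun p => H.Adj p.1 p.2) := by
          simp [Finset.mem_product, hmem.1, hmem.2, hadjxy]
        have hpos : 0 < ((S ×ˢ T).filter (fun p => H.Adj p.1 p.2)).card :=
          Finset.card_pos.mpr ⟨_, hin⟩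
        have hc : ((S ×ˢ T).filter (fun p => H₂.Adj p.1 p.2)).card + 1
            = ((S ×ˢ T).filter (fun p => H.Adj p.1 p.2)).card := by
          rw [hset, Finset.card_erase_of_mem hin]
          omega
        unfold eCnt
        rw [if_pos hmem]
        convert hc using 5
      · have hnin : (x, y) ∉ (S ×ˢ T).filter (fun p => H.Adj p.1 p.2) := by
          simp only [Finset.mem_filter, Finset.mem_product]
          tauto
        have hc : ((S ×ˢ T).filter (fun p => H₂.Adj p.1 p.2)).card
            = ((S ×ˢ T).filter (fun p => H.Adj p.1 p.2)).card := by
          rw [hset, Finset.erase_eq_of_notMem hnin]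
        unfold eCnt
        rw [if_neg hmem, add_zero]
        convert hc using 3
    -- sums of f₂
    have hsum : ∀ S : Finset V, ∑ v ∈ S, f v = (∑ v ∈ S, f₂ v)
        + ((if x ∈ S then 1 else 0) + (if y ∈ S then 1 else 0)) :=
      fun S => sum_decr hxy hfx hfy (fun v => by rw [hf₂def]) S
    have hf₂X : ∑ v ∈ X, f v = ∑ v ∈ X, f₂ v + 1 := by
      have := hsum X
      rw [if_pos hxX, if_neg hyX] at this
      omega
    have hf₂Y : ∑ v ∈ Y, f v = ∑ v ∈ Y, f₂ v + 1 := by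
      have := hsum Y
      rw [if_neg hxY, if_pos hyY] at this
      omega
    -- Ore condition for the reduced problem
    have hore₂ : ∀ S ⊆ X, ∀ T ⊆ Y,
        ∑ v ∈ S, f₂ v + ∑ v ∈ T, f₂ v ≤ eCnt H₂ S T + ∑ v ∈ X, f₂ v := by
      intro S hSX T hTY
      have hyS : y ∉ S := fun h => hyX (hSX h)
      have hxT : x ∉ T := fun h => hxY (hTY h)
      have h1 := hore S hSX T hTY
      have h2 := heCnt S T hSX hTY
      have h3 := hsum S
      have h4 := hsum T
      rw [if_neg hyS] at h3
      rw [if_neg hxT] at h4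
      by_cases hxS : x ∈ S
      · rw [if_pos hxS] at h3
        by_cases hyT : y ∈ T
        · rw [if_pos hyT] at h4
          rw [if_pos ⟨hxS, hyT⟩] at h2
          omega
        · rw [if_neg hyT] at h4
          rw [if_neg (by tauto)] at h2
          omega
      · rw [if_neg hxS] at h3
        by_cases hyT : y ∈ T
        · rw [if_pos hyT] at h4
          rw [if_neg (by tauto)] at h2
          omega
        · rw [if_neg hyT] at h4
          rw [if_neg (by tauto)] at h2
          -- here (S, T) must not be tight
          by_cases ht : ∑ v ∈ S, f v + ∑ v ∈ T, f v = eCnt H S T + ∑ v ∈ X, f v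
          · exact absurd (hT₀sub S T ⟨hSX, hTY, hxS, ht⟩ hyT₀) hyT
          · omega
    -- apply the induction hypothesis
    obtain ⟨H₃, hH₃le, hH₃deg⟩ := ih H₂ f₂ hbip₂ (by omega) (by omega) hore₂
    -- add back the edge xy
    set He : SimpleGraph V := SimpleGraph.fromEdgeSet {s(x, y)} with hHedef
    have hHe_adj : ∀ u v, He.Adj u v ↔ (u = x ∧ v = y) ∨ (u = y ∧ v = x) := by
      intro u v
      rw [hHedef, SimpleGraph.fromEdgeSet_adj, Set.mem_singleton_iff, Sym2.eq_iff]
      constructor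
      · rintro ⟨h, _⟩; exact h
      · rintro (⟨rfl, rfl⟩ | ⟨rfl, rfl⟩)
        · exact ⟨Or.inl ⟨rfl, rfl⟩, hxy⟩
        · exact ⟨Or.inr ⟨rfl, rfl⟩, hxy.symm⟩
    have hH₃nadj : ¬ H₃.Adj x y := by
      intro h
      have := hH₃le h
      rw [hH₂def, SimpleGraph.deleteEdges_adj] at this
      exact this.2 (Set.mem_singleton _)
    refine ⟨H₃ ⊔ He, ?_, ?_⟩
    · apply sup_le (le_trans hH₃le hH₂le)
      intro u v huv
      rcases (hHe_adj u v).mp huv with ⟨rfl, rfl⟩ | ⟨rfl, rfl⟩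
      · exact hadjxy
      · exact hadjxy.symm
    · intro v
      rw [degree_eq_filter]
      have hsplit : Finset.univ.filter ((H₃ ⊔ He).Adj v)
          = Finset.univ.filter (H₃.Adj v) ∪ Finset.univ.filter (He.Adj v) := by
        ext u
        simp [SimpleGraph.sup_adj]
      have hdisj2 : Disjoint (Finset.univ.filter (H₃.Adj v)) (Finset.univ.filter (He.Adj v)) := by
        rw [Finset.disjoint_left]
        intro u hu1 hu2
        rw [Finset.mem_filter] at hu1 hu2
        rcases (hHe_adj v u).mp hu2.2 with ⟨rfl, rfl⟩ | ⟨rfl, rfl⟩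
        · exact hH₃nadj hu1.2
        · exact hH₃nadj hu1.2.symm
      rw [hsplit, Finset.card_union_of_disjoint hdisj2, ← degree_eq_filter, hH₃deg v]
      have hedeg : (Finset.univ.filter (He.Adj v)).card = if v = x ∨ v = y then 1 else 0 := by
        by_cases hv1 : v = x
        · subst hv1
          rw [if_pos (Or.inl rfl)]
          have hfy' : Finset.univ.filter (He.Adj v) = {y} := by
            ext u
            simp only [Finset.mem_filter, Finset.mem_univ, true_and, Finset.mem_singleton,
              hHe_adj]
            constructor
            · rintro (⟨_, rfl⟩ | ⟨h, _⟩)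
              · rfl
              · exact absurd h hxy
            · rintro rfl; tauto
          rw [hfy', Finset.card_singleton]
        · by_cases hv2 : v = y
          · subst hv2
            rw [if_pos (Or.inr rfl)]
            have hfx' : Finset.univ.filter (He.Adj v) = {x} := by
              ext u
              simp only [Finset.mem_filter, Finset.mem_univ, true_and, Finset.mem_singleton,
                hHe_adj]
              constructor
              · rintro (⟨h, _⟩ | ⟨_, rfl⟩)
                · exact absurd h hxy.symm
                · rfl
              · rintro rfl; tauto
            rw [hfx', Finset.card_singleton]
          · rw [if_neg (by tauto)]
            have hemp : Finset.univ.filter (He.Adj v) = ∅ := by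
              ext u
              simp only [Finset.mem_filter, Finset.mem_univ, true_and,
                Finset.notMem_empty, iff_false, hHe_adj]
              rintro (⟨h, _⟩ | ⟨h, _⟩)
              · exact hv1 h
              · exact hv2 h
            rw [hemp, Finset.card_empty]
      rw [hedeg]
      simp only [hf₂def]
      by_cases hv1 : v = x
      · subst hv1
        rw [if_pos (Or.inl rfl), if_pos (Or.inl rfl)]
        omega
      · by_cases hv2 : v = y
        · subst hv2
          rw [if_pos (Or.inr rfl), if_pos (Or.inr rfl)]
          omega
        · rw [if_neg (by tauto), if_neg (by tauto)]
          omega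

end Helpers

theorem stmt_6 {V : Type*} [Fintype V] (H : SimpleGraph V) (X Y : Finset V)
    (hdisj : Disjoint X Y) (hunion : X ∪ Y = Finset.univ)
    (hbip : ∀ u v, H.Adj u v → (u ∈ X ∧ v ∈ Y) ∨ (u ∈ Y ∧ v ∈ X))
    (f : V → ℕ) (hf : ∑ v ∈ X, f v = ∑ v ∈ Y, f v) :
    (∃ H' : SimpleGraph V, H' ≤ H ∧ ∀ v, H'.degree v = f v) ↔
      ∀ S ⊆ X, ∀ T ⊆ Y,
        ((((S ×ˢ T).filter fun p => H.Adj p.1 p.2).card : ℤ)) ≥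
          (∑ v ∈ S, (f v : ℤ)) + (∑ v ∈ T, (f v : ℤ)) - ∑ v ∈ X, (f v : ℤ) := by
  constructor
  · rintro ⟨H', hle, hdeg⟩ S hS T hT
    have h := ore_forward hdisj hunion hbip f hle hdeg hS hT
    have he : eCnt H S T = ((S ×ˢ T).filter fun p => H.Adj p.1 p.2).card := rfl
    rw [← he, ← Nat.cast_sum, ← Nat.cast_sum, ← Nat.cast_sum]
    omega
  · intro h
    apply ore_exists hdisj hunion (∑ v ∈ X, f v) H f hbip hf rfl
    intro S hS T hT
    have h2 := h S hS T hT
    have he : eCnt H S T = ((S ×ˢ T).filter fun p => H.Adj p.1 p.2).card := rfl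
    rw [← he, ← Nat.cast_sum, ← Nat.cast_sum, ← Nat.cast_sum] at h2
    omega
end

section
/- Let G be a d-regular graph on [n] with d sufficiently large and n ≥ d+1 even. Then there exists a balanced bipartition {X, Y} of [n] such that each of the three graphs G[X,Y], G[X], and G[Y] satisfies: every vertex has degree in that graph equal to d/2 ± d^{2/3}. -/
open scoped Classical
open Finset

section LLL

variable {V : Type*} [Fintype V] [DecidableEq V]

/-- `A` is determined by the coordinates in `S`. -/
def Det (S : Finset V) (A : Finset (V → Bool)) : Prop :=
  ∀ f g : V → Bool, (∀ x ∈ S, f x = g x) → f ∈ A → g ∈ A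

noncomputable def mrg (S : Finset V) (f g : V → Bool) : V → Bool :=
  fun x => if x ∈ S then f x else g x

lemma mrg_mrg (S : Finset V) (f g : V → Bool) :
    mrg S (mrg S f g) (mrg S g f) = f := by
  funext x; by_cases h : x ∈ S <;> simp [mrg, h]

lemma det_indep {S T : Finset V} (hST : Disjoint S T) {A B : Finset (V → Bool)}
    (hA : Det S A) (hB : Det T B) :
    A.card * B.card = (A ∩ B).card * (Finset.univ : Finset (V → Bool)).card := by
  rw [← Finset.card_product, ← Finset.card_product]
  apply Finset.card_bij' (i := fun p _ => (mrg S p.1 p.2, mrg S p.2 p.1))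
    (j := fun q _ => (mrg S q.1 q.2, mrg S q.2 q.1))
  · rintro ⟨f, g⟩ hp
    simp only [Finset.mem_product] at hp ⊢
    refine ⟨Finset.mem_inter.2 ⟨?_, ?_⟩, Finset.mem_univ _⟩
    · exact hA f _ (fun x hx => by simp [mrg, hx]) hp.1
    · exact hB g _ (fun x hx => by simp [mrg, Finset.disjoint_right.1 hST hx]) hp.2
  · rintro ⟨f, g⟩ hq
    simp only [Finset.mem_product, Finset.mem_inter] at hq ⊢
    refine ⟨?_, ?_⟩
    · exact hA f _ (fun x hx => by simp [mrg, hx]) hq.1.1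
    · exact hB f _ (fun x hx => by simp [mrg, Finset.disjoint_right.1 hST hx]) hq.1.2
  · rintro ⟨f, g⟩ _; simp [mrg_mrg]
  · rintro ⟨f, g⟩ _; simp [mrg_mrg]

variable {ι : Type*} [Fintype ι] [DecidableEq ι]

/-- intersection of complements of the events in `T`. -/
noncomputable def Cap (A : ι → Finset (V → Bool)) (T : Finset ι) : Finset (V → Bool) :=
  Finset.univ.filter fun f => ∀ j ∈ T, f ∉ A j

lemma Cap_empty (A : ι → Finset (V → Bool)) : Cap A ∅ = Finset.univ := by
  simp [Cap]

lemma Cap_insert (A : ι → Finset (V → Bool)) (T : Finset ι) (j : ι) :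
    (Cap A T).card = (Cap A (insert j T)).card + ((A j) ∩ Cap A T).card := by
  rw [← Finset.card_union_of_disjoint]
  · congr 1
    ext f
    simp only [Cap, Finset.mem_union, Finset.mem_filter, Finset.mem_univ, true_and,
      Finset.mem_insert, Finset.mem_inter]
    constructor
    · intro h
      by_cases hj : f ∈ A j
      · exact Or.inr ⟨hj, h⟩
      · refine Or.inl fun k hk => ?_
        rcases hk with rfl | hk
        · exact hj
        · exact h k hk
    · rintro (h | h)
      · exact fun k hk => h k (by simp [hk])
      · exact h.2
  · refine Finset.disjoint_left.2 fun f hf hf' => ?_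
    simp only [Cap, Finset.mem_filter, Finset.mem_inter] at hf hf'
    exact hf.2 j (Finset.mem_insert_self _ _) hf'.1

lemma Cap_subset (A : ι → Finset (V → Bool)) {T T' : Finset ι} (h : T' ⊆ T) :
    Cap A T ⊆ Cap A T' := by
  intro f hf
  simp only [Cap, Finset.mem_filter, Finset.mem_univ, true_and] at hf ⊢
  exact fun j hj => hf j (h hj)

lemma Cap_det (A : ι → Finset (V → Bool)) (S : ι → Finset V) (hdet : ∀ i, Det (S i) (A i))
    (T : Finset ι) : Det (T.biUnion S) (Cap A T) := by
  intro f g hfg hf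
  simp only [Cap, Finset.mem_filter, Finset.mem_univ, true_and] at hf ⊢
  intro j hj hg
  exact hf j hj (hdet j g f (fun x hx => (hfg x (Finset.mem_biUnion.2 ⟨j, hj, hx⟩)).symm) hg)

end LLL

section LLLmain

set_option linter.unusedSectionVars false

variable {V : Type*} [Fintype V] [DecidableEq V] {ι : Type*} [Fintype ι] [DecidableEq ι]
variable (A : ι → Finset (V → Bool)) (S : ι → Finset V) (x : ℝ) (D : ℕ)

lemma lll_core (hdet : ∀ i, Det (S i) (A i)) (hx0 : 0 < x) (hx1 : x < 1)
    (hp : ∀ i, ((A i).card : ℝ) ≤ x * (1 - x) ^ D * (Finset.univ : Finset (V → Bool)).card)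
    (hD : ∀ i, (Finset.univ.filter fun j => ¬ Disjoint (S j) (S i)).card ≤ D) :
    ∀ (N : ℕ) (T : Finset ι), T.card ≤ N → ∀ i,
      (((A i) ∩ Cap A T).card : ℝ) ≤ x * (Cap A T).card := by
  have hx1' : (0:ℝ) ≤ 1 - x := by linarith
  intro N
  induction N with
  | zero =>
    intro T hT i
    rw [Nat.le_zero, Finset.card_eq_zero] at hT
    subst hT
    rw [Cap_empty]
    calc (((A i) ∩ Finset.univ).card : ℝ) = (A i).card := by rw [Finset.inter_univ]
      _ ≤ x * (1 - x) ^ D * (Finset.univ : Finset (V → Bool)).card := hp i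
      _ ≤ x * 1 * (Finset.univ : Finset (V → Bool)).card := by
          have := pow_le_one₀ hx1' (by linarith : (1:ℝ) - x ≤ 1) (n := D)
          have h2 : (0:ℝ) ≤ ((Finset.univ : Finset (V → Bool)).card : ℝ) := by positivity
          exact mul_le_mul_of_nonneg_right
            (mul_le_mul_of_nonneg_left this (le_of_lt hx0)) h2
      _ = x * (Finset.univ : Finset (V → Bool)).card := by ring
  | succ N ih =>
    intro T hT i
    set Tb : Finset ι := T.filter fun j => ¬ Disjoint (S j) (S i) with hTbdef
    set T2 : Finset ι := T \ Tb with hT2def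
    have hT2T : T2 ⊆ T := Finset.sdiff_subset
    have hT2disj : ∀ j ∈ T2, Disjoint (S j) (S i) := by
      intro j hj
      rw [hT2def, Finset.mem_sdiff, hTbdef, Finset.mem_filter] at hj
      by_contra h
      exact hj.2 ⟨hj.1, h⟩
    -- independence step
    have indep : (((A i) ∩ Cap A T2).card : ℝ) * (Finset.univ : Finset (V → Bool)).card
        = ((A i).card : ℝ) * (Cap A T2).card := by
      have hdisj : Disjoint (S i) (T2.biUnion S) := by
        rw [Finset.disjoint_biUnion_right]
        exact fun j hj => (hT2disj j hj).symm
      have := det_indep hdisj (hdet i) (Cap_det A S hdet T2)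
      exact_mod_cast (by exact_mod_cast this.symm : _)
    have hcardpos : (0:ℝ) < (Finset.univ : Finset (V → Bool)).card := by
      have : (0:ℕ) < (Finset.univ : Finset (V → Bool)).card :=
        Finset.card_pos.2 ⟨fun _ => true, Finset.mem_univ _⟩
      exact_mod_cast this
    have step2 : (((A i) ∩ Cap A T2).card : ℝ) ≤ x * (1 - x) ^ D * (Cap A T2).card := by
      have h1 : (((A i) ∩ Cap A T2).card : ℝ) * (Finset.univ : Finset (V → Bool)).card
          ≤ (x * (1 - x) ^ D * (Cap A T2).card) * (Finset.univ : Finset (V → Bool)).card := by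
        rw [indep]
        have h2 : (0:ℝ) ≤ ((Cap A T2).card : ℝ) := by positivity
        calc ((A i).card : ℝ) * (Cap A T2).card
            ≤ (x * (1 - x) ^ D * (Finset.univ : Finset (V → Bool)).card) * (Cap A T2).card :=
              mul_le_mul_of_nonneg_right (hp i) h2
          _ = (x * (1 - x) ^ D * (Cap A T2).card) * (Finset.univ : Finset (V → Bool)).card := by
              ring
      exact le_of_mul_le_mul_right h1 hcardpos
    -- peeling step
    have peel : ∀ (k : ℕ) (U : Finset ι), T2 ⊆ U → U ⊆ T → (U \ T2).card = k →
        (1 - x) ^ k * ((Cap A T2).card : ℝ) ≤ (Cap A U).card := by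
      intro k
      induction k with
      | zero =>
        intro U hU1 hU2 hU3
        have : U = T2 := Finset.Subset.antisymm (by
          intro u hu
          by_contra h
          have : u ∈ U \ T2 := Finset.mem_sdiff.2 ⟨hu, h⟩
          rw [Finset.card_eq_zero] at hU3
          simp [hU3] at this) hU1
        subst this
        simp
      | succ k ihk =>
        intro U hU1 hU2 hU3
        have hne : (U \ T2).Nonempty := by
          rw [← Finset.card_pos, hU3]; omega
        obtain ⟨j, hj⟩ := hne
        rw [Finset.mem_sdiff] at hj
        set U' := U.erase j with hU'def
        have hjU : j ∈ U := hj.1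
        have hT2U' : T2 ⊆ U' := fun u hu =>
          Finset.mem_erase.2 ⟨fun h => hj.2 (h ▸ hu), hU1 hu⟩
        have hU'T : U' ⊆ T := fun u hu => hU2 (Finset.erase_subset _ _ hu)
        have hU'card : (U' \ T2).card = k := by
          have : U' \ T2 = (U \ T2).erase j := by
            rw [hU'def]
            ext u
            simp only [Finset.mem_sdiff, Finset.mem_erase]
            tauto
          rw [this, Finset.card_erase_of_mem (Finset.mem_sdiff.2 hj), hU3]
          omega
        have hUU' : U = insert j U' := by
          rw [hU'def, Finset.insert_erase hjU]
        have hsmall : U'.card ≤ N := by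
          have h1 : U'.card < U.card := Finset.card_erase_lt_of_mem hjU
          have h2 : U.card ≤ T.card := Finset.card_le_card hU2
          omega
        have hAj : (((A j) ∩ Cap A U').card : ℝ) ≤ x * (Cap A U').card := ih U' hsmall j
        have hsplit := Cap_insert A U' j
        have : ((Cap A U).card : ℝ) ≥ (1 - x) * (Cap A U').card := by
          rw [hUU']
          have : ((Cap A U').card : ℝ) = ((Cap A (insert j U')).card : ℝ)
              + (((A j) ∩ Cap A U').card : ℝ) := by exact_mod_cast hsplit
          linarith
        calc (1 - x) ^ (k+1) * ((Cap A T2).card : ℝ)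
            = (1 - x) * ((1 - x) ^ k * ((Cap A T2).card : ℝ)) := by ring
          _ ≤ (1 - x) * ((Cap A U').card : ℝ) :=
              mul_le_mul_of_nonneg_left (ihk U' hT2U' hU'T hU'card) hx1'
          _ ≤ (Cap A U).card := this
    have hTbD : Tb.card ≤ D := by
      refine le_trans (Finset.card_le_card ?_) (hD i)
      intro j hj
      rw [hTbdef, Finset.mem_filter] at hj
      exact Finset.mem_filter.2 ⟨Finset.mem_univ _, hj.2⟩
    have hTT2 : T \ T2 = Tb := by
      rw [hT2def]
      ext u
      simp only [Finset.mem_sdiff, hTbdef, Finset.mem_filter]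
      tauto
    have hpeelT : (1 - x) ^ Tb.card * ((Cap A T2).card : ℝ) ≤ (Cap A T).card := by
      have := peel Tb.card T hT2T (le_refl T) (by rw [hTT2])
      exact this
    have hsub : (A i) ∩ Cap A T ⊆ (A i) ∩ Cap A T2 :=
      Finset.inter_subset_inter (le_refl _) (Cap_subset A hT2T)
    calc (((A i) ∩ Cap A T).card : ℝ)
        ≤ (((A i) ∩ Cap A T2).card : ℝ) := by exact_mod_cast Finset.card_le_card hsub
      _ ≤ x * (1 - x) ^ D * (Cap A T2).card := step2
      _ = x * (1 - x) ^ (D - Tb.card) * ((1 - x) ^ Tb.card * (Cap A T2).card) := by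
          have h : (1 - x) ^ D = (1 - x) ^ (D - Tb.card) * (1 - x) ^ Tb.card := by
            rw [← pow_add]
            congr 1
            omega
          rw [h]
          ring
      _ ≤ x * (1 - x) ^ (D - Tb.card) * (Cap A T).card := by
          apply mul_le_mul_of_nonneg_left hpeelT
          positivity
      _ ≤ x * 1 * (Cap A T).card := by
          apply mul_le_mul_of_nonneg_right
          · apply mul_le_mul_of_nonneg_left _ (le_of_lt hx0)
            exact pow_le_one₀ hx1' (by linarith)
          · positivity
      _ = x * (Cap A T).card := by ring

lemma lll (hdet : ∀ i, Det (S i) (A i)) (hx0 : 0 < x) (hx1 : x < 1)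
    (hp : ∀ i, ((A i).card : ℝ) ≤ x * (1 - x) ^ D * (Finset.univ : Finset (V → Bool)).card)
    (hD : ∀ i, (Finset.univ.filter fun j => ¬ Disjoint (S j) (S i)).card ≤ D) :
    ∃ f : V → Bool, ∀ i, f ∉ A i := by
  have hx1' : (0:ℝ) ≤ 1 - x := by linarith
  have main : ∀ T : Finset ι, (1 - x) ^ T.card * ((Finset.univ : Finset (V → Bool)).card : ℝ)
      ≤ (Cap A T).card := by
    intro T
    induction T using Finset.induction with
    | empty => simp [Cap_empty]
    | @insert j T hjT ihT =>
      have hcore := lll_core A S x D hdet hx0 hx1 hp hD T.card T (le_refl _) j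
      have hsplit := Cap_insert A T j
      have h1 : ((Cap A T).card : ℝ) = ((Cap A (insert j T)).card : ℝ)
          + (((A j) ∩ Cap A T).card : ℝ) := by exact_mod_cast hsplit
      have h2 : (1 - x) * ((Cap A T).card : ℝ) ≤ (Cap A (insert j T)).card := by linarith
      rw [Finset.card_insert_of_notMem hjT]
      calc (1 - x) ^ (T.card + 1) * ((Finset.univ : Finset (V → Bool)).card : ℝ)
          = (1 - x) * ((1 - x) ^ T.card * ((Finset.univ : Finset (V → Bool)).card : ℝ)) := by
            ring
        _ ≤ (1 - x) * ((Cap A T).card : ℝ) := mul_le_mul_of_nonneg_left ihT hx1'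
        _ ≤ _ := h2
  have hcardpos : (0:ℝ) < ((Finset.univ : Finset (V → Bool)).card : ℝ) := by
    have : (0:ℕ) < (Finset.univ : Finset (V → Bool)).card :=
      Finset.card_pos.2 ⟨fun _ => true, Finset.mem_univ _⟩
    exact_mod_cast this
  have := main Finset.univ
  have hpos : (0:ℝ) < (Cap A Finset.univ).card := by
    refine lt_of_lt_of_le ?_ this
    exact mul_pos (pow_pos (by linarith) _) hcardpos
  have hne : (Cap A Finset.univ).Nonempty := by
    rw [← Finset.card_pos]
    exact_mod_cast hpos
  obtain ⟨f, hf⟩ := hne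
  simp only [Cap, Finset.mem_filter] at hf
  exact ⟨f, fun i => hf.2 i (Finset.mem_univ _)⟩

end LLLmain

section Chernoff

set_option linter.unusedSectionVars false

variable {V : Type*} [Fintype V] [DecidableEq V]

noncomputable def Zf (δ : V → ℝ) (f : V → Bool) : ℝ := ∑ i, (if f i then δ i else -δ i)

lemma Zf_neg (δ : V → ℝ) (f : V → Bool) : Zf (fun i => -δ i) f = -Zf δ f := by
  rw [Zf, Zf, ← Finset.sum_neg_distrib]
  refine Finset.sum_congr rfl fun i _ => ?_
  by_cases h : f i <;> simp [h]

lemma mgf_bound (δ : V → ℝ) (l : ℝ) :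
    ∑ f : V → Bool, Real.exp (l * Zf δ f)
      ≤ ((Finset.univ : Finset (V → Bool)).card : ℝ)
          * Real.exp (l ^ 2 * (∑ i, δ i ^ 2) / 2) := by
  have key : ∑ f : V → Bool, Real.exp (l * Zf δ f)
      = ∏ i : V, (Real.exp (l * δ i) + Real.exp (l * -δ i)) := by
    calc ∑ f : V → Bool, Real.exp (l * Zf δ f)
        = ∑ f : V → Bool, ∏ i, Real.exp (l * (if f i then δ i else -δ i)) := by
          refine Finset.sum_congr rfl fun f _ => ?_
          rw [Zf, Finset.mul_sum, Real.exp_sum]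
      _ = ∏ i, ∑ b : Bool, Real.exp (l * (if b then δ i else -δ i)) := by
          rw [← Fintype.piFinset_univ]
          exact (Finset.prod_univ_sum (fun _ => (Finset.univ : Finset Bool))
            (fun i b => Real.exp (l * if b then δ i else -δ i))).symm
      _ = ∏ i : V, (Real.exp (l * δ i) + Real.exp (l * -δ i)) := by
          refine Finset.prod_congr rfl fun i _ => ?_
          rw [Fintype.sum_bool]
          simp
  rw [key]
  have hcard : ((Finset.univ : Finset (V → Bool)).card : ℝ) = 2 ^ (Fintype.card V) := by
    rw [Finset.card_univ, Fintype.card_fun]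
    push_cast
    simp
  calc ∏ i : V, (Real.exp (l * δ i) + Real.exp (l * -δ i))
      ≤ ∏ i : V, 2 * Real.exp ((l * δ i) ^ 2 / 2) := by
        refine Finset.prod_le_prod (fun i _ => by positivity) fun i _ => ?_
        have h := Real.cosh_le_exp_half_sq (l * δ i)
        rw [Real.cosh_eq] at h
        have : l * -δ i = -(l * δ i) := by ring
        rw [this]
        linarith
    _ = 2 ^ (Fintype.card V) * Real.exp (l ^ 2 * (∑ i, δ i ^ 2) / 2) := by
        rw [Finset.prod_mul_distrib, Finset.prod_const, ← Real.exp_sum, Finset.card_univ]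
        have heq : ∑ i : V, (l * δ i) ^ 2 / 2 = l ^ 2 * (∑ i, δ i ^ 2) / 2 := by
          rw [Finset.mul_sum, ← Finset.sum_div]
          congr 1
          exact Finset.sum_congr rfl fun i _ => by ring
        rw [heq]
    _ = ((Finset.univ : Finset (V → Bool)).card : ℝ)
          * Real.exp (l ^ 2 * (∑ i, δ i ^ 2) / 2) := by rw [hcard]

lemma tail_one_sided (δ : V → ℝ) (t l : ℝ) (hl : 0 ≤ l) :
    (((Finset.univ.filter fun f : V → Bool => t ≤ Zf δ f).card : ℝ)) * Real.exp (l * t)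
      ≤ ((Finset.univ : Finset (V → Bool)).card : ℝ)
          * Real.exp (l ^ 2 * (∑ i, δ i ^ 2) / 2) := by
  refine le_trans ?_ (mgf_bound δ l)
  calc (((Finset.univ.filter fun f : V → Bool => t ≤ Zf δ f).card : ℝ)) * Real.exp (l * t)
      = ∑ _f ∈ (Finset.univ.filter fun f : V → Bool => t ≤ Zf δ f), Real.exp (l * t) := by
        rw [Finset.sum_const, nsmul_eq_mul]
    _ ≤ ∑ f ∈ (Finset.univ.filter fun f : V → Bool => t ≤ Zf δ f), Real.exp (l * Zf δ f) := by
        refine Finset.sum_le_sum fun f hf => ?_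
        rw [Finset.mem_filter] at hf
        exact Real.exp_le_exp.2 (mul_le_mul_of_nonneg_left hf.2 hl)
    _ ≤ ∑ f : V → Bool, Real.exp (l * Zf δ f) := by
        refine Finset.sum_le_sum_of_subset_of_nonneg (Finset.filter_subset _ _)
          fun f _ _ => by positivity

lemma tail_abs (δ : V → ℝ) (K t : ℝ) (hK : ∑ i, δ i ^ 2 ≤ K) (hKpos : 0 < K) (ht : 0 < t) :
    (((Finset.univ.filter fun f : V → Bool => t ≤ |Zf δ f|).card : ℝ))
      ≤ 2 * Real.exp (-(t ^ 2 / (2 * K)))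
          * ((Finset.univ : Finset (V → Bool)).card : ℝ) := by
  set l : ℝ := t / K with hl
  have hl0 : 0 ≤ l := by positivity
  have hexp : l ^ 2 * K / 2 - l * t = -(t ^ 2 / (2 * K)) := by
    field_simp [hl]
    rw [hl, div_mul_cancel₀ t (ne_of_gt hKpos)]
    ring
  have one_sided : ∀ ε : V → ℝ, (∑ i, ε i ^ 2 ≤ K) →
      (((Finset.univ.filter fun f : V → Bool => t ≤ Zf ε f).card : ℝ))
        ≤ Real.exp (-(t ^ 2 / (2 * K))) * ((Finset.univ : Finset (V → Bool)).card : ℝ) := by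
    intro ε hε
    have h1 := tail_one_sided ε t l hl0
    have h2 : Real.exp (l ^ 2 * (∑ i, ε i ^ 2) / 2) ≤ Real.exp (l ^ 2 * K / 2) := by
      apply Real.exp_le_exp.2
      have : l ^ 2 * (∑ i, ε i ^ 2) ≤ l ^ 2 * K := mul_le_mul_of_nonneg_left hε (by positivity)
      linarith
    have hcard0 : (0:ℝ) ≤ ((Finset.univ : Finset (V → Bool)).card : ℝ) := by positivity
    have h3 : (((Finset.univ.filter fun f : V → Bool => t ≤ Zf ε f).card : ℝ)) * Real.exp (l * t)
        ≤ ((Finset.univ : Finset (V → Bool)).card : ℝ) * Real.exp (l ^ 2 * K / 2) :=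
      le_trans h1 (mul_le_mul_of_nonneg_left h2 hcard0)
    have hepos : (0:ℝ) < Real.exp (l * t) := Real.exp_pos _
    rw [← hexp, Real.exp_sub, div_mul_eq_mul_div, le_div_iff₀ hepos]
    linarith [h3]
  have hsplit : (Finset.univ.filter fun f : V → Bool => t ≤ |Zf δ f|)
      ⊆ (Finset.univ.filter fun f : V → Bool => t ≤ Zf δ f)
        ∪ (Finset.univ.filter fun f : V → Bool => t ≤ Zf (fun i => -δ i) f) := by
    intro f hf
    rw [Finset.mem_filter] at hf
    rcases abs_cases (Zf δ f) with ⟨h, _⟩ | ⟨h, _⟩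
    · exact Finset.mem_union_left _ (Finset.mem_filter.2 ⟨Finset.mem_univ _, h ▸ hf.2⟩)
    · refine Finset.mem_union_right _ (Finset.mem_filter.2 ⟨Finset.mem_univ _, ?_⟩)
      rw [Zf_neg]
      exact h ▸ hf.2
  have hneg : ∑ i, (-δ i) ^ 2 ≤ K := by
    refine le_trans (le_of_eq (Finset.sum_congr rfl fun i _ => by ring)) hK
  calc (((Finset.univ.filter fun f : V → Bool => t ≤ |Zf δ f|).card : ℝ))
      ≤ (((Finset.univ.filter fun f : V → Bool => t ≤ Zf δ f)
          ∪ (Finset.univ.filter fun f : V → Bool => t ≤ Zf (fun i => -δ i) f)).card : ℝ) := by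
        exact_mod_cast Finset.card_le_card hsplit
    _ ≤ (((Finset.univ.filter fun f : V → Bool => t ≤ Zf δ f).card : ℝ))
        + (((Finset.univ.filter fun f : V → Bool => t ≤ Zf (fun i => -δ i) f).card : ℝ)) := by
        exact_mod_cast Finset.card_union_le _ _
    _ ≤ Real.exp (-(t ^ 2 / (2 * K))) * ((Finset.univ : Finset (V → Bool)).card : ℝ)
        + Real.exp (-(t ^ 2 / (2 * K))) * ((Finset.univ : Finset (V → Bool)).card : ℝ) :=
        add_le_add (one_sided δ hK) (one_sided _ hneg)
    _ = 2 * Real.exp (-(t ^ 2 / (2 * K)))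
          * ((Finset.univ : Finset (V → Bool)).card : ℝ) := by ring

end Chernoff

section Pairs

def pw (m : ℕ) (i : Fin m) (b : Bool) : Fin (m + m) :=
  ⟨2 * i.val + (if b then 1 else 0), by have := i.isLt; cases b <;> simp <;> omega⟩

def pk {m : ℕ} (v : Fin (m + m)) : Fin m :=
  ⟨v.val / 2, by have := v.isLt; omega⟩

def ps {m : ℕ} (v : Fin (m + m)) : Bool := decide (v.val % 2 = 1)

lemma pk_pw (m : ℕ) (i : Fin m) (b : Bool) : pk (pw m i b) = i := by
  apply Fin.ext
  simp only [pk, pw]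
  cases b <;> simp <;> omega

lemma ps_pw (m : ℕ) (i : Fin m) (b : Bool) : ps (pw m i b) = b := by
  simp only [ps, pw]
  cases b <;> simp <;> omega

lemma pw_eta {m : ℕ} (v : Fin (m + m)) : pw m (pk v) (ps v) = v := by
  apply Fin.ext
  simp only [pw, pk, ps]
  rcases Nat.mod_two_eq_zero_or_one v.val with h | h <;> simp [h] <;> omega

/-- the balanced set determined by `f`. -/
noncomputable def Xset {m : ℕ} (f : Fin m → Bool) : Finset (Fin (m + m)) :=
  Finset.univ.filter fun v => f (pk v) = ps v

lemma mem_Xset_iff {m : ℕ} (f : Fin m → Bool) (i : Fin m) (b : Bool) :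
    pw m i b ∈ Xset f ↔ f i = b := by
  simp [Xset, pk_pw, ps_pw]

lemma Xset_balanced {m : ℕ} (f : Fin m → Bool) : 2 * (Xset f).card = m + m := by
  have hcompl : ((Xset f)ᶜ : Finset (Fin (m + m))).card = (Xset f).card := by
    apply Finset.card_bij (i := fun v _ => pw m (pk v) (!(ps v)))
    · intro v hv
      simp only [Finset.mem_compl, Xset, Finset.mem_filter, Finset.mem_univ, true_and] at hv ⊢
      rw [pk_pw, ps_pw]
      rcases Bool.eq_false_or_eq_true (ps v) with h | h <;> rcases Bool.eq_false_or_eq_true (f (pk v)) with h2 | h2 <;>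
        simp_all
    · intro u hu v hv huv
      have h1 : pk (pw m (pk u) (!(ps u))) = pk (pw m (pk v) (!(ps v))) := by rw [huv]
      have h2 : ps (pw m (pk u) (!(ps u))) = ps (pw m (pk v) (!(ps v))) := by rw [huv]
      rw [pk_pw, pk_pw] at h1
      rw [ps_pw, ps_pw] at h2
      have h3 : ps u = ps v := by
        rcases Bool.eq_false_or_eq_true (ps u) with h | h <;>
          rcases Bool.eq_false_or_eq_true (ps v) with h' | h' <;> simp_all
      rw [← pw_eta u, ← pw_eta v, h1, h3]
    · intro v hv
      simp only [Xset, Finset.mem_filter, Finset.mem_univ, true_and] at hv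
      refine ⟨pw m (pk v) (!(ps v)), ?_, ?_⟩
      · simp only [Finset.mem_compl, Xset, Finset.mem_filter, Finset.mem_univ, true_and]
        rw [pk_pw, ps_pw]
        rcases Bool.eq_false_or_eq_true (ps v) with h | h <;> simp_all
      · rw [pk_pw, ps_pw, Bool.not_not, pw_eta]
  have htot : (Xset f).card + ((Xset f)ᶜ : Finset (Fin (m + m))).card = m + m := by
    rw [Finset.card_add_card_compl, Fintype.card_fin]
  omega

lemma sum_over_pairs {m : ℕ} (F : Fin (m + m) → ℝ) :
    ∑ v : Fin (m + m), F v = ∑ i : Fin m, (F (pw m i true) + F (pw m i false)) := by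
  let e : Fin m × Bool ≃ Fin (m + m) :=
    { toFun := fun p => pw m p.1 p.2
      invFun := fun v => (pk v, ps v)
      left_inv := fun p => by simp [pk_pw, ps_pw]
      right_inv := fun v => pw_eta v }
  rw [← Equiv.sum_comp e F]
  rw [Fintype.sum_prod_type]
  refine Finset.sum_congr rfl fun i _ => ?_
  rw [Fintype.sum_bool]
  rfl

end Pairs

section App

set_option linter.unusedSectionVars false

variable {m : ℕ} (G : SimpleGraph (Fin (m + m)))

noncomputable def av (v : Fin (m + m)) (i : Fin m) (b : Bool) : ℝ :=
  if G.Adj v (pw m i b) then 1 else 0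

noncomputable def dlt (v : Fin (m + m)) (i : Fin m) : ℝ := av G v i true - av G v i false

noncomputable def Sv (v : Fin (m + m)) : Finset (Fin m) :=
  Finset.univ.filter fun i => dlt G v i ≠ 0

noncomputable def Av (v : Fin (m + m)) (d : ℕ) : Finset (Fin m → Bool) :=
  Finset.univ.filter fun f =>
    ¬ |(((Xset f).filter (G.Adj v)).card : ℝ) - (d : ℝ) / 2| ≤ (d : ℝ) ^ ((2 : ℝ) / 3)

lemma deg_sum {d : ℕ} (hreg : G.IsRegularOfDegree d) (v : Fin (m + m)) :
    ∑ i : Fin m, (av G v i true + av G v i false) = (d : ℝ) := by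
  have h1 : (G.neighborFinset v).card = d := hreg v
  rw [SimpleGraph.neighborFinset_eq_filter] at h1
  have h2 : ((Finset.univ.filter (G.Adj v)).card : ℝ)
      = ∑ u : Fin (m + m), (if G.Adj v u then (1:ℝ) else 0) := by
    rw [Finset.card_filter]
    push_cast
    rfl
  rw [← h1, h2, sum_over_pairs (fun u => if G.Adj v u then (1:ℝ) else 0)]
  rfl

lemma ecard_eq (v : Fin (m + m)) (f : Fin m → Bool) :
    (((Xset f).filter (G.Adj v)).card : ℝ) = ∑ i : Fin m, av G v i (f i) := by
  rw [Finset.card_eq_sum_card_fiberwise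
    (f := fun u => pk u) (t := Finset.univ) (fun u _ => Finset.mem_univ _)]
  push_cast
  refine Finset.sum_congr rfl fun i _ => ?_
  have hfib : ((Xset f).filter (G.Adj v)).filter (fun u => pk u = i)
      = if G.Adj v (pw m i (f i)) then {pw m i (f i)} else (∅ : Finset (Fin (m + m))) := by
    ext u
    constructor
    · intro hu
      simp only [Finset.mem_filter, Xset, Finset.mem_univ, true_and] at hu
      obtain ⟨⟨hX, hAdj⟩, hpk⟩ := hu
      have hX' : f i = ps u := by rw [← hpk]; exact hX
      have hu' : u = pw m i (f i) := by
        rw [← pw_eta u, hpk, hX']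
      rw [hu'] at hAdj
      simp [hAdj, hu']
    · intro hu
      by_cases hAdj : G.Adj v (pw m i (f i))
      · simp only [hAdj, if_true, Finset.mem_singleton] at hu
        subst hu
        simp only [Finset.mem_filter, Xset, Finset.mem_univ, true_and]
        exact ⟨⟨by rw [pk_pw, ps_pw], hAdj⟩, pk_pw m i (f i)⟩
      · simp [hAdj] at hu
  rw [hfib]
  by_cases hAdj : G.Adj v (pw m i (f i)) <;> simp [hAdj, av]

lemma Z_eq {d : ℕ} (hreg : G.IsRegularOfDegree d) (v : Fin (m + m)) (f : Fin m → Bool) :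
    Zf (dlt G v) f = 2 * (((Xset f).filter (G.Adj v)).card : ℝ) - d := by
  rw [ecard_eq, ← deg_sum G hreg v, Zf, Finset.mul_sum, ← Finset.sum_sub_distrib]
  refine Finset.sum_congr rfl fun i _ => ?_
  rcases Bool.eq_false_or_eq_true (f i) with h | h <;> rw [h] <;> simp [dlt] <;> ring

lemma sum_sq_le {d : ℕ} (hreg : G.IsRegularOfDegree d) (v : Fin (m + m)) :
    ∑ i : Fin m, dlt G v i ^ 2 ≤ (d : ℝ) := by
  rw [← deg_sum G hreg v]
  refine Finset.sum_le_sum fun i _ => ?_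
  simp only [dlt, av]
  split_ifs <;> norm_num

lemma det_Av (v : Fin (m + m)) (d : ℕ) : Det (Sv G v) (Av G v d) := by
  intro f g hfg hf
  simp only [Av, Finset.mem_filter, Finset.mem_univ, true_and] at hf ⊢
  have he : (((Xset f).filter (G.Adj v)).card : ℝ) = (((Xset g).filter (G.Adj v)).card : ℝ) := by
    rw [ecard_eq, ecard_eq]
    refine Finset.sum_congr rfl fun i _ => ?_
    by_cases hi : dlt G v i ≠ 0
    · rw [hfg i (by simp [Sv, hi])]
    · push_neg at hi
      simp only [dlt, sub_eq_zero] at hi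
      rcases Bool.eq_false_or_eq_true (f i) with h | h <;>
        rcases Bool.eq_false_or_eq_true (g i) with h' | h' <;>
        rw [h, h'] <;> simp [hi]
  rwa [he] at hf

lemma dlt_ne_adj {v : Fin (m + m)} {i : Fin m} (h : dlt G v i ≠ 0) :
    ∃ b, G.Adj v (pw m i b) := by
  by_contra hcon
  push_neg at hcon
  apply h
  simp [dlt, av, hcon true, hcon false]

lemma card_Sv {d : ℕ} (hreg : G.IsRegularOfDegree d) (v : Fin (m + m)) :
    ((Sv G v).card : ℝ) ≤ (d : ℝ) := by
  rw [← deg_sum G hreg v]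
  calc ((Sv G v).card : ℝ) = ∑ _i ∈ Sv G v, (1:ℝ) := by rw [Finset.sum_const]; simp
    _ ≤ ∑ i ∈ Sv G v, (av G v i true + av G v i false) := by
        refine Finset.sum_le_sum fun i hi => ?_
        simp only [Sv, Finset.mem_filter] at hi
        obtain ⟨b, hb⟩ := dlt_ne_adj G hi.2
        cases b <;> simp only [av, hb, if_pos] <;> split_ifs <;> norm_num
    _ ≤ ∑ i : Fin m, (av G v i true + av G v i false) := by
        refine Finset.sum_le_sum_of_subset_of_nonneg (Finset.subset_univ _) fun i _ _ => ?_
        simp only [av]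
        split_ifs <;> norm_num

lemma dep_bound {d : ℕ} (hreg : G.IsRegularOfDegree d) (v : Fin (m + m)) :
    (Finset.univ.filter fun j => ¬ Disjoint (Sv G j) (Sv G v)).card ≤ 2 * d * d := by
  classical
  set Big : Finset (Fin (m + m)) := (G.neighborFinset v).biUnion fun u =>
    ({pw m (pk u) true, pw m (pk u) false} : Finset (Fin (m + m))).biUnion
      fun u' => G.neighborFinset u' with hBig
  have hsub : (Finset.univ.filter fun j => ¬ Disjoint (Sv G j) (Sv G v)) ⊆ Big := by
    intro j hj
    rw [Finset.mem_filter] at hj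
    obtain ⟨i, hij, hiv⟩ := Finset.not_disjoint_iff.1 hj.2
    simp only [Sv, Finset.mem_filter] at hij hiv
    obtain ⟨b, hb⟩ := dlt_ne_adj G hiv.2
    obtain ⟨c, hc⟩ := dlt_ne_adj G hij.2
    rw [hBig]
    refine Finset.mem_biUnion.2 ⟨pw m i b, ?_, ?_⟩
    · rwa [SimpleGraph.mem_neighborFinset]
    · refine Finset.mem_biUnion.2 ⟨pw m i c, ?_, ?_⟩
      · rw [pk_pw]
        cases c <;> simp
      · rw [SimpleGraph.mem_neighborFinset]
        exact hc.symm
  have hcard : Big.card ≤ 2 * d * d := by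
    rw [hBig]
    refine le_trans (Finset.card_biUnion_le) ?_
    have hinner : ∀ u : Fin (m + m),
        (({pw m (pk u) true, pw m (pk u) false} : Finset (Fin (m + m))).biUnion
          fun u' => G.neighborFinset u').card ≤ 2 * d := by
      intro u
      refine le_trans (Finset.card_biUnion_le) ?_
      calc ∑ u' ∈ ({pw m (pk u) true, pw m (pk u) false} : Finset (Fin (m + m))),
            (G.neighborFinset u').card
          = ∑ u' ∈ ({pw m (pk u) true, pw m (pk u) false} : Finset (Fin (m + m))), d := by
            refine Finset.sum_congr rfl fun u' _ => hreg u'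
        _ ≤ 2 * d := by
            rw [Finset.sum_const, smul_eq_mul]
            have : ({pw m (pk u) true, pw m (pk u) false} : Finset (Fin (m + m))).card ≤ 2 :=
              Finset.card_insert_le _ _ |>.trans (by simp)
            exact Nat.mul_le_mul_right d this
    calc ∑ u ∈ G.neighborFinset v, (({pw m (pk u) true, pw m (pk u) false} :
            Finset (Fin (m + m))).biUnion fun u' => G.neighborFinset u').card
        ≤ ∑ _u ∈ G.neighborFinset v, 2 * d := Finset.sum_le_sum fun u _ => hinner u
      _ = d * (2 * d) := by
          have hdeg : (G.neighborFinset v).card = d := hreg v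
          rw [Finset.sum_const, smul_eq_mul, hdeg]
      _ = 2 * d * d := by ring
  exact le_trans (Finset.card_le_card hsub) hcard

end App

section Final

set_option linter.unusedSectionVars false

variable {m : ℕ} (G : SimpleGraph (Fin (m + m)))

lemma card_Av {d : ℕ} (hreg : G.IsRegularOfDegree d) (hd : 1 ≤ d) (v : Fin (m + m)) :
    ((Av G v d).card : ℝ) ≤ 2 * Real.exp (-(2 * (d:ℝ) ^ ((1:ℝ)/3)))
      * ((Finset.univ : Finset (Fin m → Bool)).card : ℝ) := by
  have hd0 : (0:ℝ) < d := by exact_mod_cast hd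
  set t : ℝ := 2 * (d:ℝ) ^ ((2:ℝ)/3) with ht
  have ht0 : 0 < t := by
    have : (0:ℝ) < (d:ℝ) ^ ((2:ℝ)/3) := Real.rpow_pos_of_pos hd0 _
    rw [ht]; linarith
  have hsub : Av G v d ⊆ Finset.univ.filter fun f : Fin m → Bool => t ≤ |Zf (dlt G v) f| := by
    intro f hf
    simp only [Av, Finset.mem_filter, Finset.mem_univ, true_and] at hf ⊢
    push_neg at hf
    rw [Z_eq G hreg v f]
    have h2 : 2 * (((Xset f).filter (G.Adj v)).card : ℝ) - (d:ℝ)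
        = 2 * ((((Xset f).filter (G.Adj v)).card : ℝ) - (d:ℝ)/2) := by ring
    rw [h2, abs_mul, abs_two, ht]
    have := le_of_lt hf
    linarith
  have htail := tail_abs (dlt G v) (d:ℝ) t (sum_sq_le G hreg v) hd0 ht0
  have hexp : t ^ 2 / (2 * (d:ℝ)) = 2 * (d:ℝ) ^ ((1:ℝ)/3) := by
    have e1 : ((d:ℝ) ^ ((2:ℝ)/3)) ^ (2:ℕ) = (d:ℝ) ^ ((4:ℝ)/3) := by
      rw [← Real.rpow_natCast ((d:ℝ) ^ ((2:ℝ)/3)) 2, ← Real.rpow_mul (le_of_lt hd0)]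
      norm_num
    have e2 : (d:ℝ) ^ ((4:ℝ)/3) = (d:ℝ) ^ ((1:ℝ)/3) * (d:ℝ) := by
      rw [show (4:ℝ)/3 = 1/3 + 1 by norm_num, Real.rpow_add hd0, Real.rpow_one]
    rw [ht, mul_pow, e1, e2]
    field_simp
  calc ((Av G v d).card : ℝ)
      ≤ (((Finset.univ.filter fun f : Fin m → Bool => t ≤ |Zf (dlt G v) f|).card : ℝ)) := by
        exact_mod_cast Finset.card_le_card hsub
    _ ≤ 2 * Real.exp (-(t ^ 2 / (2 * (d:ℝ))))
        * ((Finset.univ : Finset (Fin m → Bool)).card : ℝ) := htail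
    _ = 2 * Real.exp (-(2 * (d:ℝ) ^ ((1:ℝ)/3)))
        * ((Finset.univ : Finset (Fin m → Bool)).card : ℝ) := by rw [hexp]

lemma numeric (d : ℕ) (hd : 2 ^ 33 ≤ d) :
    2 * Real.exp (-(2 * (d:ℝ) ^ ((1:ℝ)/3)))
      ≤ (1 / (2 * ((2 * d * d : ℕ) : ℝ) + 2))
          * (1 - 1 / (2 * ((2 * d * d : ℕ) : ℝ) + 2)) ^ (2 * d * d) := by
  have hd0 : (0:ℝ) < d := by
    have : (0:ℕ) < d := lt_of_lt_of_le (by norm_num) hd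
    exact_mod_cast this
  set Dr : ℝ := ((2 * d * d : ℕ) : ℝ) with hDr
  have hDr0 : 0 ≤ Dr := by positivity
  set x : ℝ := 1 / (2 * Dr + 2) with hx
  have hx0 : 0 < x := by positivity
  have hx1 : x ≤ 1 / 2 := by
    rw [hx]
    apply div_le_div_of_nonneg_left (by norm_num) (by norm_num) (by linarith)
  have hbern : 1 - Dr * x ≤ (1 - x) ^ (2 * d * d) := by
    calc (1:ℝ) - Dr * x = 1 + ((2 * d * d : ℕ) : ℝ) * (-x) := by rw [hDr]; ring
      _ ≤ (1 + (-x)) ^ (2 * d * d) :=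
          one_add_mul_le_pow (by linarith : (-2:ℝ) ≤ -x) (2 * d * d)
      _ = (1 - x) ^ (2 * d * d) := by ring_nf
  have hDx : Dr * x ≤ 1 / 2 := by
    rw [hx, mul_one_div, div_le_div_iff₀ (by linarith) (by norm_num)]
    linarith
  have hhalf : (1:ℝ) / 2 ≤ (1 - x) ^ (2 * d * d) := le_trans (by linarith) hbern
  set y : ℝ := (d:ℝ) ^ ((1:ℝ)/3) with hy
  have hy0 : 0 < y := Real.rpow_pos_of_pos hd0 _
  have hy3 : y ^ (3:ℕ) = (d:ℝ) := by
    rw [hy, ← Real.rpow_natCast ((d:ℝ) ^ ((1:ℝ)/3)) 3, ← Real.rpow_mul (le_of_lt hd0)]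
    norm_num
  have hy2048 : (2048:ℝ) ≤ y := by
    apply le_of_pow_le_pow_left₀ (n := 3) (by norm_num) (le_of_lt hy0)
    rw [hy3]
    have : ((2 ^ 33 : ℕ) : ℝ) ≤ (d:ℝ) := by exact_mod_cast hd
    calc (2048:ℝ) ^ 3 = ((2 ^ 33 : ℕ) : ℝ) := by norm_num
      _ ≤ (d:ℝ) := this
  have hexp_ge : 16 * (d:ℝ) ^ (2:ℕ) + 8 ≤ Real.exp (2 * y) := by
    have h1 : Real.exp (2 * y) = Real.exp (y / 4) ^ (8:ℕ) := by
      rw [← Real.exp_nat_mul]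
      congr 1
      ring
    have h2 : y / 4 ≤ Real.exp (y / 4) := by
      have := Real.add_one_le_exp (y / 4)
      linarith
    have h3 : (y / 4) ^ (8:ℕ) ≤ Real.exp (y / 4) ^ (8:ℕ) :=
      pow_le_pow_left₀ (by positivity) h2 8
    have h4 : 16 * (d:ℝ) ^ (2:ℕ) + 8 ≤ (y / 4) ^ (8:ℕ) := by
      have hd2 : (d:ℝ) ^ (2:ℕ) = y ^ (6:ℕ) := by
        rw [← hy3]
        ring
      rw [hd2]
      have hy6 : (1:ℝ) ≤ y ^ (6:ℕ) := by
        calc (1:ℝ) = 1 ^ (6:ℕ) := by norm_num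
          _ ≤ y ^ (6:ℕ) := pow_le_pow_left₀ (by norm_num) (by linarith) 6
      have hy2sq : (2048:ℝ) ^ (2:ℕ) ≤ y ^ (2:ℕ) := pow_le_pow_left₀ (by norm_num) hy2048 2
      have key : (2048:ℝ) ^ (2:ℕ) * y ^ (6:ℕ) ≤ y ^ (2:ℕ) * y ^ (6:ℕ) :=
        mul_le_mul_of_nonneg_right hy2sq (by positivity)
      have h5 : (y / 4) ^ (8:ℕ) = y ^ (8:ℕ) / 65536 := by
        rw [div_pow]
        norm_num
      rw [h5]
      nlinarith [key, hy6]
    rw [h1]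
    exact le_trans h4 h3
  have hDr_eq : Dr = 2 * (d:ℝ) * (d:ℝ) := by rw [hDr]; push_cast; ring
  calc 2 * Real.exp (-(2 * y)) = 2 / Real.exp (2 * y) := by
        rw [Real.exp_neg]
        ring
    _ ≤ 2 / (16 * (d:ℝ) ^ (2:ℕ) + 8) := by
        apply div_le_div_of_nonneg_left (by norm_num) (by positivity) hexp_ge
    _ = x * (1 / 2) := by
        rw [hx, hDr_eq]
        field_simp
        ring
    _ ≤ x * (1 - x) ^ (2 * d * d) := mul_le_mul_of_nonneg_left hhalf (le_of_lt hx0)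

end Final

theorem stmt_10 :
    ∃ d₀ : ℕ, ∀ d : ℕ, d₀ ≤ d → ∀ n : ℕ, Even n → d + 1 ≤ n →
      ∀ G : SimpleGraph (Fin n), G.IsRegularOfDegree d →
        ∃ X : Finset (Fin n), 2 * X.card = n ∧
          ∀ v : Fin n,
            |((X.filter (G.Adj v)).card : ℝ) - (d : ℝ) / 2| ≤ (d : ℝ) ^ ((2 : ℝ) / 3) ∧
            |((Xᶜ.filter (G.Adj v)).card : ℝ) - (d : ℝ) / 2| ≤ (d : ℝ) ^ ((2 : ℝ) / 3) := by
  refine ⟨2 ^ 33, fun d hd n hEven hn G hreg => ?_⟩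
  obtain ⟨m, rfl⟩ := hEven
  have hd1 : 1 ≤ d := le_trans (by norm_num) hd
  have hx0 : (0:ℝ) < 1 / (2 * ((2 * d * d : ℕ) : ℝ) + 2) := by positivity
  have hx1 : 1 / (2 * ((2 * d * d : ℕ) : ℝ) + 2) < 1 := by
    have h0 : (0:ℝ) ≤ ((2 * d * d : ℕ) : ℝ) := by positivity
    rw [div_lt_one (by linarith)]
    linarith
  have hp : ∀ v : Fin (m + m), ((Av G v d).card : ℝ)
      ≤ 1 / (2 * ((2 * d * d : ℕ) : ℝ) + 2)
        * (1 - 1 / (2 * ((2 * d * d : ℕ) : ℝ) + 2)) ^ (2 * d * d)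
        * ((Finset.univ : Finset (Fin m → Bool)).card : ℝ) := by
    intro v
    refine le_trans (card_Av G hreg hd1 v) ?_
    exact mul_le_mul_of_nonneg_right (numeric d hd) (by positivity)
  obtain ⟨f, hf⟩ := lll (fun v => Av G v d) (fun v => Sv G v)
    (1 / (2 * ((2 * d * d : ℕ) : ℝ) + 2)) (2 * d * d)
    (fun v => det_Av G v d) hx0 hx1 hp (fun v => dep_bound G hreg v)
  refine ⟨Xset f, Xset_balanced f, fun v => ?_⟩
  have hv := hf v
  simp only [Av, Finset.mem_filter, Finset.mem_univ, true_and, not_not] at hv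
  refine ⟨hv, ?_⟩
  have hsplit : ((Xset f).filter (G.Adj v)).card + (((Xset f)ᶜ).filter (G.Adj v)).card = d := by
    rw [← Finset.card_union_of_disjoint (Finset.disjoint_filter_filter
      disjoint_compl_right)]
    have hu : (Xset f).filter (G.Adj v) ∪ ((Xset f)ᶜ).filter (G.Adj v)
        = Finset.univ.filter (G.Adj v) := by
      rw [← Finset.filter_union, Finset.union_compl]
    rw [hu, ← SimpleGraph.neighborFinset_eq_filter]
    exact hreg v
  have hc : ((((Xset f)ᶜ).filter (G.Adj v)).card : ℝ)
      = (d:ℝ) - (((Xset f).filter (G.Adj v)).card : ℝ) := by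
    have h := congrArg (Nat.cast : ℕ → ℝ) hsplit
    push_cast at h
    linarith
  rw [hc]
  have heq : (d:ℝ) - (((Xset f).filter (G.Adj v)).card : ℝ) - (d:ℝ)/2
      = -((((Xset f).filter (G.Adj v)).card : ℝ) - (d:ℝ)/2) := by ring
  rw [heq, abs_neg]
  exact hv
end

section
/- Let (A_i)_{i=1}^n be events in a probability space with dependency digraph D, and suppose there exist reals α_i ∈ [0,1) such that P(A_i) ≤ α_i · Π_{(A_i,A_j)∈E(D)} (1 - α_j) for all i. Then P(∩_{i=1}^n Ā_i) ≥ Π_{i=1}^n (1 - α_i) > 0. -/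
open MeasureTheory
open scoped ENNReal

theorem stmt_17 {Ω : Type*} [MeasurableSpace Ω] (μ : Measure Ω) [IsProbabilityMeasure μ]
    (n : ℕ) (A : Fin n → Set Ω) (hA : ∀ i, MeasurableSet (A i))
    (E : Fin n → Fin n → Prop) [DecidableRel E]
    (hdep : ∀ i : Fin n, ∀ S : Finset (Fin n),
      (∀ j ∈ S, j ≠ i ∧ ¬E i j) → ∀ c : Fin n → Bool,
      μ (A i ∩ ⋂ j ∈ S, (if c j then A j else (A j)ᶜ)) =
        μ (A i) * μ (⋂ j ∈ S, (if c j then A j else (A j)ᶜ)))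
    (α : Fin n → ℝ≥0∞) (hα : ∀ i, α i < 1)
    (hP : ∀ i, μ (A i) ≤ α i * ∏ j ∈ Finset.univ.filter (fun j => E i j), (1 - α j)) :
    (∏ i, (1 - α i)) ≤ μ (⋂ i, (A i)ᶜ) ∧ 0 < ∏ i, (1 - α i) := by
  classical
  set C : Finset (Fin n) → Set Ω := fun S => ⋂ j ∈ S, (A j)ᶜ with hCdef
  have hCmono : ∀ {S T : Finset (Fin n)}, S ⊆ T → C T ⊆ C S := by
    intro S T hST
    exact Set.biInter_mono hST (fun j _ => le_refl _)
  have hsplit : ∀ (j : Fin n) (T : Finset (Fin n)),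
      μ (C T) = μ (A j ∩ C T) + μ (C (insert j T)) := by
    intro j T
    have h := measure_inter_add_diff (μ := μ) (C T) (hA j)
    have hins : C (insert j T) = C T \ A j := by
      simp only [hCdef, Finset.set_biInter_insert, Set.diff_eq]
      exact Set.inter_comm _ _
    rw [hins, ← h, Set.inter_comm]
  have step : ∀ (j : Fin n) (T : Finset (Fin n)),
      μ (A j ∩ C T) ≤ α j * μ (C T) →
      (1 - α j) * μ (C T) ≤ μ (C (insert j T)) := by
    intro j T hkey
    have hm : μ (C T) ≠ ∞ := measure_ne_top μ _
    have hsub : (1 - α j) * μ (C T) = μ (C T) - α j * μ (C T) := by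
      rw [ENNReal.sub_mul (fun _ _ => hm), one_mul]
    rw [hsub, tsub_le_iff_right]
    calc μ (C T) = μ (A j ∩ C T) + μ (C (insert j T)) := hsplit j T
    _ ≤ α j * μ (C T) + μ (C (insert j T)) := add_le_add_left hkey _
    _ = μ (C (insert j T)) + α j * μ (C T) := add_comm _ _
  have key : ∀ N : ℕ, ∀ S : Finset (Fin n), S.card = N → ∀ i, i ∉ S →
      μ (A i ∩ C S) ≤ α i * μ (C S) := by
    intro N
    induction N using Nat.strong_induction_on with
    | _ N IH =>
      intro S hS i hi
      set S₁ : Finset (Fin n) := S.filter (fun j => E i j) with hS₁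
      set S₂ : Finset (Fin n) := S.filter (fun j => ¬ E i j) with hS₂
      have hunion : S₂ ∪ S₁ = S := by
        rw [hS₁, hS₂, Finset.union_comm]
        exact Finset.filter_union_filter_not_eq _ S
      -- independence over S₂
      have hindep : μ (A i ∩ C S₂) = μ (A i) * μ (C S₂) := by
        have h := hdep i S₂ (fun j hj => by
          simp only [hS₂, Finset.mem_filter] at hj
          exact ⟨fun hji => hi (hji ▸ hj.1), hj.2⟩) (fun _ => false)
        simpa using h
      -- inner induction
      have inner : ∀ T : Finset (Fin n), T ⊆ S₁ →
          (∏ j ∈ T, (1 - α j)) * μ (C S₂) ≤ μ (C (S₂ ∪ T)) := by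
        intro T
        induction T using Finset.induction_on with
        | empty => intro _; simp
        | @insert j T hj IH' =>
          intro hT
          have hTS : T ⊆ S₁ := (Finset.subset_insert j T).trans hT
          have hjS₁ : j ∈ S₁ := hT (Finset.mem_insert_self j T)
          have hjE : E i j := (Finset.mem_filter.mp hjS₁).2
          have hjS : j ∈ S := (Finset.mem_filter.mp hjS₁).1
          have hjnot : j ∉ S₂ ∪ T := by
            intro hmem
            rcases Finset.mem_union.mp hmem with h | h
            · exact (Finset.mem_filter.mp h).2 hjE
            · exact hj h
          have hsubs : S₂ ∪ T ⊆ S.erase j := by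
            intro x hx
            refine Finset.mem_erase.mpr ⟨fun hxj => hjnot (hxj ▸ hx), ?_⟩
            rcases Finset.mem_union.mp hx with h | h
            · exact (Finset.mem_filter.mp h).1
            · exact (Finset.mem_filter.mp (hTS h)).1
          have hlt : (S₂ ∪ T).card < N := by
            calc (S₂ ∪ T).card ≤ (S.erase j).card := Finset.card_le_card hsubs
            _ < S.card := Finset.card_erase_lt_of_mem hjS
            _ = N := hS
          have hkeyj := IH _ hlt (S₂ ∪ T) rfl j hjnot
          have hstep := step j (S₂ ∪ T) hkeyj
          have hins : S₂ ∪ insert j T = insert j (S₂ ∪ T) := by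
            ext x; simp [Finset.mem_union, Finset.mem_insert, or_left_comm]
          calc (∏ k ∈ insert j T, (1 - α k)) * μ (C S₂)
              = (1 - α j) * ((∏ k ∈ T, (1 - α k)) * μ (C S₂)) := by
                rw [Finset.prod_insert hj, mul_assoc]
            _ ≤ (1 - α j) * μ (C (S₂ ∪ T)) := mul_le_mul_right (IH' hTS) _
            _ ≤ μ (C (insert j (S₂ ∪ T))) := hstep
            _ = μ (C (S₂ ∪ insert j T)) := by rw [hins]
      have hinner := inner S₁ (le_refl _)
      rw [hunion] at hinner
      have hprodsub : (∏ j ∈ Finset.univ.filter (fun j => E i j), (1 - α j)) ≤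
          ∏ j ∈ S₁, (1 - α j) := by
        have hsub : S₁ ⊆ Finset.univ.filter (fun j => E i j) := fun x hx =>
          Finset.mem_filter.mpr ⟨Finset.mem_univ x, (Finset.mem_filter.mp hx).2⟩
        rw [← Finset.prod_sdiff hsub]
        calc (∏ j ∈ (Finset.univ.filter (fun j => E i j)) \ S₁, (1 - α j)) *
              ∏ j ∈ S₁, (1 - α j)
            ≤ 1 * ∏ j ∈ S₁, (1 - α j) :=
              mul_le_mul_left (Finset.prod_le_one' (fun x _ => tsub_le_self)) _
          _ = ∏ j ∈ S₁, (1 - α j) := one_mul _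
      calc μ (A i ∩ C S) ≤ μ (A i ∩ C S₂) := by
            apply measure_mono
            exact Set.inter_subset_inter_right _ (hCmono (Finset.filter_subset _ S))
        _ = μ (A i) * μ (C S₂) := hindep
        _ ≤ (α i * ∏ j ∈ Finset.univ.filter (fun j => E i j), (1 - α j)) * μ (C S₂) :=
            mul_le_mul_left (hP i) _
        _ ≤ (α i * ∏ j ∈ S₁, (1 - α j)) * μ (C S₂) :=
            mul_le_mul_left (mul_le_mul_right hprodsub _) _
        _ = α i * ((∏ j ∈ S₁, (1 - α j)) * μ (C S₂)) := by rw [mul_assoc]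
        _ ≤ α i * μ (C S) := mul_le_mul_right hinner _
  have main : ∀ T : Finset (Fin n), (∏ j ∈ T, (1 - α j)) ≤ μ (C T) := by
    intro T
    induction T using Finset.induction_on with
    | empty => simp [hCdef]
    | @insert j T hj IH' =>
      have hkeyj := key T.card T rfl j hj
      calc (∏ k ∈ insert j T, (1 - α k)) = (1 - α j) * ∏ k ∈ T, (1 - α k) :=
            Finset.prod_insert hj
        _ ≤ (1 - α j) * μ (C T) := mul_le_mul_right IH' _
        _ ≤ μ (C (insert j T)) := step j T hkeyj
  constructor
  · have := main Finset.univ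
    simpa [hCdef] using this
  · rw [CanonicallyOrderedAdd.prod_pos]
    intro i _
    exact tsub_pos_of_lt (hα i)
end
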